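/- arXiv:1111.6094 — 11 statements merged into one kernel-verified Lean document; each statement's English description precedes it below -/
import Mathlib

section
/- Let A be a q-positive subset of an SSD space B. Then: (i) for every b ∈ B, Φ_A(b) ≤ Φ_A^@(b) and q(b) ≤ Φ_A^@(b); (ii) for every a ∈ A, Φ_A(a) = q(a) = Φ_A^@(a). -/
noncomputable section

variable {B : Type*} [AddCommGroup B] [Module ℝ B]

/-- The quadratic form `q(x) = ½⌊x,x⌋` associated to the bilinear form `br`. -/
def qQ (br : B →ₗ[ℝ] B →ₗ[ℝ] ℝ) (x : B) : ℝ := (1 / 2) * br x x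

/-- `A` is `q`-positive: nonempty and `q(b - c) ≥ 0` for all `b, c ∈ A`. -/
def IsQPositive (br : B →ₗ[ℝ] B →ₗ[ℝ] ℝ) (A : Set B) : Prop :=
  A.Nonempty ∧ ∀ b ∈ A, ∀ c ∈ A, 0 ≤ qQ br (b - c)

/-- `A^π`, the set of points `q`-positively related to `A`. -/
def qPi (br : B →ₗ[ℝ] B →ₗ[ℝ] ℝ) (A : Set B) : Set B :=
  {b : B | ∀ a ∈ A, 0 ≤ qQ br (b - a)}

/-- `A` is maximally `q`-positive. -/
def IsMaxQPositive (br : B →ₗ[ℝ] B →ₗ[ℝ] ℝ) (A : Set B) : Prop :=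
  IsQPositive br A ∧ ∀ C : Set B, IsQPositive br C → A ⊆ C → C = A

/-- The generalized Fitzpatrick function `Φ_A(x) = sup_{a ∈ A} (⌊x,a⌋ - q(a))`. -/
def PhiF (br : B →ₗ[ℝ] B →ₗ[ℝ] ℝ) (A : Set B) (x : B) : EReal :=
  ⨆ a ∈ A, ((br x a - qQ br a : ℝ) : EReal)

/-- The intrinsic conjugate `f^@(b) = sup_{c ∈ B} (⌊c,b⌋ - f(c))`. -/
def intrinsicConj (br : B →ₗ[ℝ] B →ₗ[ℝ] ℝ) (f : B → EReal) (b : B) : EReal :=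
  ⨆ c : B, ((br c b : ℝ) : EReal) - f c

/-- `P_q(f) = {b : f(b) = q(b)}`. -/
def PqSet (br : B →ₗ[ℝ] B →ₗ[ℝ] ℝ) (f : B → EReal) : Set B :=
  {b : B | f b = ((qQ br b : ℝ) : EReal)}

/-- `G_f = {b : f(b) + f^@(b) = ⌊b,b⌋}`. -/
def GSet (br : B →ₗ[ℝ] B →ₗ[ℝ] ℝ) (f : B → EReal) : Set B :=
  {b : B | f b + intrinsicConj br f b = ((br b b : ℝ) : EReal)}

/-- Convexity for `ℝ ∪ {+∞}`-valued functions. -/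
def ConvexE (f : B → EReal) : Prop :=
  ∀ x y : B, ∀ α β : ℝ, 0 ≤ α → 0 ≤ β → α + β = 1 →
    f (α • x + β • y) ≤ (α : EReal) * f x + (β : EReal) * f y

/-- The weak topology `w(B,B)` induced by the functionals `⌊·,b⌋`, `b ∈ B`. -/
def weakTop (br : B →ₗ[ℝ] B →ₗ[ℝ] ℝ) : TopologicalSpace B :=
  ⨅ b : B, TopologicalSpace.induced (fun x => br x b) inferInstance

/-- Lower semicontinuity with respect to the weak topology `w(B,B)`. -/
def LscW (br : B →ₗ[ℝ] B →ₗ[ℝ] ℝ) (f : B → EReal) : Prop :=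
  @LowerSemicontinuous B EReal (weakTop br) _ f

/-- `A` is `q`-representable: it has a `w(B,B)`-lsc proper convex `q`-representation. -/
def IsQRepresentable (br : B →ₗ[ℝ] B →ₗ[ℝ] ℝ) (A : Set B) : Prop :=
  ∃ f : B → EReal, LscW br f ∧ ConvexE f ∧ (∃ x, f x ≠ ⊤) ∧
    (∀ x, ((qQ br x : ℝ) : EReal) ≤ f x) ∧ PqSet br f = A

lemma qQ_sub' (br : B →ₗ[ℝ] B →ₗ[ℝ] ℝ) (hsym : ∀ x y : B, br x y = br y x)
    (a c : B) : qQ br (a - c) = qQ br a + qQ br c - br a c := by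
  simp only [qQ, map_sub, LinearMap.sub_apply]
  rw [hsym c a]; ring

lemma term_le_phi (br : B →ₗ[ℝ] B →ₗ[ℝ] ℝ) (A : Set B) {a : B} (ha : a ∈ A) (x : B) :
    ((br x a - qQ br a : ℝ) : EReal) ≤ PhiF br A x :=
  le_iSup₂ (f := fun a (_ : a ∈ A) => ((br x a - qQ br a : ℝ) : EReal)) a ha

lemma phi_eq (br : B →ₗ[ℝ] B →ₗ[ℝ] ℝ) (hsym : ∀ x y : B, br x y = br y x)
    (A : Set B) (hA : IsQPositive br A) {a : B} (ha : a ∈ A) :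
    PhiF br A a = ((qQ br a : ℝ) : EReal) := by
  apply le_antisymm
  · apply iSup₂_le
    intro c hc
    have h := hA.2 a ha c hc
    rw [qQ_sub' br hsym a c] at h
    exact_mod_cast (by linarith : br a c - qQ br c ≤ qQ br a)
  · have := term_le_phi br A ha a
    have hb : br a a = 2 * qQ br a := by simp [qQ]
    rw [hb] at this
    convert this using 2
    ring

/-- For a q-positive A: (i) Φ_A ≤ Φ_A^@ and q ≤ Φ_A^@ on B;
(ii) Φ_A = q = Φ_A^@ on A. -/
theorem stmt0 [Nontrivial B] (br : B →ₗ[ℝ] B →ₗ[ℝ] ℝ)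
    (hsym : ∀ x y : B, br x y = br y x)
    (A : Set B) (hA : IsQPositive br A) :
    (∀ b : B, PhiF br A b ≤ intrinsicConj br (PhiF br A) b ∧
      ((qQ br b : ℝ) : EReal) ≤ intrinsicConj br (PhiF br A) b) ∧
    (∀ a ∈ A, PhiF br A a = ((qQ br a : ℝ) : EReal) ∧
      intrinsicConj br (PhiF br A) a = ((qQ br a : ℝ) : EReal)) := by
  obtain ⟨⟨a0, ha0⟩, hpos⟩ := hA
  -- Φ ≤ Φ^@ everywhere
  have hPhiLe : ∀ b : B, PhiF br A b ≤ intrinsicConj br (PhiF br A) b := by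
    intro b
    apply iSup₂_le
    intro a ha
    have h1 : ((br b a - qQ br a : ℝ) : EReal)
        = ((br a b : ℝ) : EReal) - PhiF br A a := by
      rw [phi_eq br hsym A ⟨⟨a0, ha0⟩, hpos⟩ ha, hsym a b, ← EReal.coe_sub]
    rw [h1]
    exact le_iSup (fun c => ((br c b : ℝ) : EReal) - PhiF br A c) a
  -- Φ is never ⊥
  have hne_bot : ∀ b : B, PhiF br A b ≠ ⊥ := by
    intro b h
    have := term_le_phi br A ha0 b
    rw [h] at this
    exact (EReal.coe_ne_bot _) (le_bot_iff.mp this)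
  constructor
  · intro b
    refine ⟨hPhiLe b, ?_⟩
    by_cases hcase : ((qQ br b : ℝ) : EReal) ≤ PhiF br A b
    · exact hcase.trans (hPhiLe b)
    · push_neg at hcase
      have hne_top : PhiF br A b ≠ ⊤ := fun h => by
        rw [h] at hcase; exact (not_top_lt hcase)
      set r : ℝ := (PhiF br A b).toReal with hr
      have hrr : ((r : ℝ) : EReal) = PhiF br A b := EReal.coe_toReal hne_top (hne_bot b)
      have hrlt : r ≤ qQ br b := by
        have := hcase.le
        rw [← hrr] at this
        exact_mod_cast this
      have hterm : ((br b b : ℝ) : EReal) - PhiF br A b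
          ≤ intrinsicConj br (PhiF br A) b :=
        le_iSup (fun c => ((br c b : ℝ) : EReal) - PhiF br A c) b
      refine le_trans ?_ hterm
      rw [← hrr, ← EReal.coe_sub, EReal.coe_le_coe_iff]
      have hb : br b b = 2 * qQ br b := by simp [qQ]
      rw [hb]; linarith
  · intro a ha
    have hphi := phi_eq br hsym A ⟨⟨a0, ha0⟩, hpos⟩ ha
    refine ⟨hphi, le_antisymm ?_ ?_⟩
    · apply iSup_le
      intro c
      have h1 : ((br c a - qQ br a : ℝ) : EReal) ≤ PhiF br A c := term_le_phi br A ha c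
      calc ((br c a : ℝ) : EReal) - PhiF br A c
          ≤ ((br c a : ℝ) : EReal) - ((br c a - qQ br a : ℝ) : EReal) :=
            EReal.sub_le_sub le_rfl h1
        _ = ((qQ br a : ℝ) : EReal) := by rw [← EReal.coe_sub]; norm_num
    · rw [← hphi]; exact hPhiLe a
end
end

section
/- Let A be a q-positive subset of an SSD space B. Then Φ_A^@ is the largest w(B,B)-lower semicontinuous convex function majorized by q on A; that is, Φ_A^@ is w(B,B)-lower semicontinuous, convex, satisfies Φ_A^@ ≤ q on A, and every w(B,B)-lower semicontinuous convex function f : B → ℝ ∪ {+∞} with f ≤ q on A satisfies f ≤ Φ_A^@ on all of B. -/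
noncomputable section

variable {B : Type*} [AddCommGroup B] [Module ℝ B]

section topo
variable (br : B →ₗ[ℝ] B →ₗ[ℝ] ℝ)

lemma weakTop_eq : weakTop br = (WeakBilin.instTopologicalSpace br : TopologicalSpace (WeakBilin br)) := by
  show weakTop br = TopologicalSpace.induced (fun x y => br x y) Pi.topologicalSpace
  rw [show (Pi.topologicalSpace : TopologicalSpace (B → ℝ)) =
      ⨅ b : B, TopologicalSpace.induced (fun f => f b) inferInstance from rfl, induced_iInf]
  simp_rw [induced_compose]
  rfl

lemma wk_tag : @IsTopologicalAddGroup B (weakTop br) _ := by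
  rw [weakTop_eq]; exact inferInstanceAs (IsTopologicalAddGroup (WeakBilin br))

lemma wk_csmul : @ContinuousSMul ℝ B _ _ (weakTop br) := by
  rw [weakTop_eq]; exact inferInstanceAs (ContinuousSMul ℝ (WeakBilin br))

lemma wk_lcs : @LocallyConvexSpace ℝ B _ _ _ _ (weakTop br) := by
  rw [weakTop_eq]; exact inferInstanceAs (LocallyConvexSpace ℝ (WeakBilin br))

lemma wk_eval_cont (c : B) : @Continuous B ℝ (weakTop br) _ (fun x => br x c) := by
  rw [weakTop_eq]; exact WeakBilin.eval_continuous br c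

lemma wk_nhds_zero : @nhds B (weakTop br) 0 = ⨅ b : B, Filter.comap (fun x => br x b) (nhds 0) := by
  rw [weakTop]
  rw [nhds_iInf]
  congr 1
  ext b
  rw [nhds_induced]
  simp

lemma wk_dual (ψ : B →ₗ[ℝ] ℝ) (hψ : @Continuous B ℝ (weakTop br) _ ψ) :
    ∃ c : B, ∀ x, ψ x = br x c := by
  have h0 : (ψ ⁻¹' Set.Ioo (-1 : ℝ) 1) ∈ @nhds B (weakTop br) 0 := by
    letI := weakTop br
    have hc : ContinuousAt ψ 0 := hψ.continuousAt
    have : Set.Ioo (-1 : ℝ) 1 ∈ nhds (ψ 0) := by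
      rw [map_zero]; exact Ioo_mem_nhds (by norm_num) (by norm_num)
    exact hc this
  rw [wk_nhds_zero] at h0
  obtain ⟨I, hIfin, V, hV, hU⟩ := Filter.mem_iInf.mp h0
  haveI : Finite I := hIfin.to_subtype
  have hker : ⨅ i : I, LinearMap.ker (br.flip (i : B)) ≤ LinearMap.ker ψ := by
    intro x hx
    simp only [Submodule.mem_iInf, LinearMap.mem_ker, LinearMap.flip_apply] at hx
    have hmem : ∀ m : ℝ, (m • x) ∈ ψ ⁻¹' Set.Ioo (-1 : ℝ) 1 := by
      intro m
      rw [hU]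
      refine Set.mem_iInter.mpr fun i => ?_
      obtain ⟨U, hU0, hUsub⟩ := Filter.mem_comap.mp (hV i)
      apply hUsub
      show br (m • x) (i : B) ∈ U
      rw [map_smul, LinearMap.smul_apply, hx i, smul_zero]
      exact mem_of_mem_nhds hU0
    rw [LinearMap.mem_ker]
    by_contra hne
    have := hmem ((ψ x)⁻¹ * 2)
    simp only [Set.mem_preimage, map_smul, smul_eq_mul, Set.mem_Ioo] at this
    rw [mul_assoc, mul_comm (2:ℝ), ← mul_assoc, inv_mul_cancel₀ hne, one_mul] at this
    norm_num at this
  have hspan := mem_span_of_iInf_ker_le_ker hker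
  have hle : Submodule.span ℝ (Set.range fun i : I => br.flip (i : B)) ≤ LinearMap.range br.flip := by
    rw [Submodule.span_le]
    rintro _ ⟨i, rfl⟩
    exact LinearMap.mem_range_self _ _
  obtain ⟨c, hc⟩ := hle hspan
  exact ⟨c, fun x => by rw [← hc, LinearMap.flip_apply]⟩

end topo

section sep
variable (br : B →ₗ[ℝ] B →ₗ[ℝ] ℝ)

lemma epi_closed (f : B → EReal) (hf : LscW br f) :
    @IsClosed (B × ℝ) (@instTopologicalSpaceProd B ℝ (weakTop br) _)
      {p : B × ℝ | f p.1 ≤ (p.2 : EReal)} := by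
  letI := weakTop br
  rw [← isOpen_compl_iff, isOpen_iff_forall_mem_open]
  rintro ⟨x0, s0⟩ hp
  simp only [Set.mem_compl_iff, Set.mem_setOf_eq, not_le] at hp
  obtain ⟨y, hy1, hy2⟩ := EReal.exists_between_coe_real hp
  refine ⟨(f ⁻¹' Set.Ioi (y : EReal)) ×ˢ Set.Iio y, ?_, ?_, ?_⟩
  · rintro ⟨x, s⟩ ⟨hx, hs⟩
    simp only [Set.mem_preimage, Set.mem_Ioi, Set.mem_Iio] at hx hs
    simp only [Set.mem_compl_iff, Set.mem_setOf_eq, not_le]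
    exact lt_trans (by exact_mod_cast hs) hx
  · exact (hf.isOpen_preimage y).prod isOpen_Iio
  · exact ⟨hy2, by exact_mod_cast hy1⟩

lemma epi_convex (f : B → EReal) (hconv : ConvexE f) (hbot : ∀ x, f x ≠ ⊥) :
    Convex ℝ {p : B × ℝ | f p.1 ≤ (p.2 : EReal)} := by
  rintro ⟨x, s⟩ hx ⟨y, s'⟩ hy a b ha hb hab
  simp only [Set.mem_setOf_eq] at hx hy ⊢
  have hxt : f x ≠ ⊤ := fun h => by simp [h] at hx
  have hyt : f y ≠ ⊤ := fun h => by simp [h] at hy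
  obtain ⟨v, hv⟩ : ∃ v : ℝ, f x = (v : EReal) := ⟨(f x).toReal, (EReal.coe_toReal hxt (hbot x)).symm⟩
  obtain ⟨w, hw⟩ : ∃ w : ℝ, f y = (w : EReal) := ⟨(f y).toReal, (EReal.coe_toReal hyt (hbot y)).symm⟩
  have hvs : v ≤ s := by rw [hv] at hx; exact_mod_cast hx
  have hws : w ≤ s' := by rw [hw] at hy; exact_mod_cast hy
  show f (a • x + b • y) ≤ ((a • s + b • s' : ℝ) : EReal)
  calc f (a • x + b • y) ≤ (a : EReal) * f x + (b : EReal) * f y := hconv x y a b ha hb hab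
    _ = ((a * v + b * w : ℝ) : EReal) := by rw [hv, hw]; push_cast; ring_nf
    _ ≤ ((a • s + b • s' : ℝ) : EReal) := by
        simp only [smul_eq_mul]
        exact_mod_cast add_le_add (mul_le_mul_of_nonneg_left hvs ha)
          (mul_le_mul_of_nonneg_left hws hb)

lemma wk_sep (f : B → EReal) (hlsc : LscW br f) (hconv : ConvexE f) (hbot : ∀ x, f x ≠ ⊥)
    (b : B) (t : ℝ) (h : (t : EReal) < f b) :
    ∃ (c0 : B) (lam u : ℝ),
      (∀ x : B, ∀ v : ℝ, f x ≤ (v : EReal) → u < br x c0 + lam * v) ∧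
      br b c0 + lam * t < u := by
  letI := weakTop br
  haveI := wk_tag br
  haveI := wk_csmul br
  haveI := wk_lcs br
  have hdisj : (b, t) ∉ {p : B × ℝ | f p.1 ≤ (p.2 : EReal)} := by
    simp only [Set.mem_setOf_eq, not_le]; exact h
  obtain ⟨φ, u, hφ1, hφ2⟩ := geometric_hahn_banach_point_closed
    (epi_convex f hconv hbot) (epi_closed br f hlsc) hdisj
  set ψ : B →ₗ[ℝ] ℝ := (φ : (B × ℝ) →ₗ[ℝ] ℝ).comp (LinearMap.inl ℝ B ℝ) with hψdef
  have hψc : Continuous (ψ : B → ℝ) := by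
    have h1 : Continuous (fun x : B => ((x, 0) : B × ℝ)) := continuous_id.prodMk continuous_const
    exact φ.continuous.comp h1
  obtain ⟨c0, hc0⟩ := wk_dual br ψ hψc
  set lam := φ ((0 : B), (1 : ℝ)) with hlamdef
  have hdecomp : ∀ (x : B) (s : ℝ), φ (x, s) = br x c0 + lam * s := by
    intro x s
    have hxs : ((x, s) : B × ℝ) = (x, 0) + s • ((0 : B), (1 : ℝ)) := by
      simp [Prod.ext_iff]
    rw [hxs, map_add, map_smul, smul_eq_mul]
    have : φ ((x, 0) : B × ℝ) = ψ x := rfl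
    rw [this, hc0 x, mul_comm]
  refine ⟨c0, lam, u, ?_, ?_⟩
  · intro x v hxv
    have := hφ2 (x, v) hxv
    rwa [hdecomp] at this
  · have := hφ1
    rwa [hdecomp] at this

end sep

section minorant
variable (br : B →ₗ[ℝ] B →ₗ[ℝ] ℝ)

/-- Nonnegativity of the vertical component of any separating functional. -/
lemma wk_lam_nonneg (f : B → EReal) {a0 : B} {v0 : ℝ} (ha0 : f a0 = (v0 : EReal))
    {c0 : B} {lam u : ℝ}
    (hS : ∀ x : B, ∀ v : ℝ, f x ≤ (v : EReal) → u < br x c0 + lam * v) :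
    0 ≤ lam := by
  by_contra hneg
  push_neg at hneg
  set s : ℝ := max v0 ((u - br a0 c0) / lam) with hs
  have h1 : u < br a0 c0 + lam * s :=
    hS a0 s (by rw [ha0]; exact_mod_cast le_max_left _ _)
  have h2 : (u - br a0 c0) / lam ≤ s := le_max_right _ _
  have h3 : s * lam ≤ u - br a0 c0 := (div_le_iff_of_neg hneg).mp h2
  nlinarith

/-- Existence of a continuous affine minorant of a proper lsc convex function. -/
lemma wk_minorant (f : B → EReal) (hlsc : LscW br f) (hconv : ConvexE f)
    (hbot : ∀ x, f x ≠ ⊥) {a0 : B} {v0 : ℝ} (ha0 : f a0 = (v0 : EReal)) :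
    ∃ (c1 : B) (r1 : ℝ), ∀ x, ((br x c1 - r1 : ℝ) : EReal) ≤ f x := by
  have hlt : ((v0 - 1 : ℝ) : EReal) < f a0 := by
    rw [ha0]; exact_mod_cast (by linarith : v0 - 1 < v0)
  obtain ⟨c0, lam, u, hS, hb⟩ := wk_sep br f hlsc hconv hbot a0 (v0 - 1) hlt
  have hlam : 0 ≤ lam := wk_lam_nonneg br f ha0 hS
  rcases eq_or_lt_of_le hlam with hlam0 | hlampos
  · exfalso
    have h1 := hS a0 v0 (le_of_eq ha0)
    rw [← hlam0] at h1 hb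
    simp only [zero_mul, add_zero] at h1 hb
    linarith
  · refine ⟨(-lam⁻¹) • c0, -(u / lam), fun x => ?_⟩
    by_cases hx : f x = ⊤
    · rw [hx]; exact le_top
    · obtain ⟨v, hv⟩ : ∃ v : ℝ, f x = (v : EReal) :=
        ⟨(f x).toReal, (EReal.coe_toReal hx (hbot x)).symm⟩
      have h1 := hS x v (le_of_eq hv)
      rw [hv]
      have hbrc : br x ((-lam⁻¹) • c0) = -lam⁻¹ * br x c0 := by
        rw [map_smul, smul_eq_mul]
      rw [hbrc]
      have hlamne : lam ≠ 0 := ne_of_gt hlampos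
      have heq : -lam⁻¹ * br x c0 - -(u / lam) = (u - br x c0) / lam := by
        rw [div_eq_mul_inv, div_eq_mul_inv]; ring
      have key : -lam⁻¹ * br x c0 - -(u / lam) ≤ v := by
        rw [heq]
        exact (div_le_iff₀ hlampos).mpr (by linarith)
      exact_mod_cast key

/-- Fenchel–Moreau core: an affine minorant passing above `t` at `b` whenever `t < f b`. -/
lemma wk_minorant_at (f : B → EReal) (hlsc : LscW br f) (hconv : ConvexE f)
    (hbot : ∀ x, f x ≠ ⊥) {a0 : B} {v0 : ℝ} (ha0 : f a0 = (v0 : EReal))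
    (b : B) (t : ℝ) (hbt : (t : EReal) < f b) :
    ∃ (c : B) (r : ℝ), (∀ x, ((br x c - r : ℝ) : EReal) ≤ f x) ∧ t < br b c - r := by
  obtain ⟨c0, lam, u, hS, hb⟩ := wk_sep br f hlsc hconv hbot b t hbt
  have hlam : 0 ≤ lam := wk_lam_nonneg br f ha0 hS
  rcases eq_or_lt_of_le hlam with hlam0 | hlampos
  · -- vertical separation: f b = ⊤ direction; combine with a global minorant
    rw [← hlam0] at hS hb
    simp only [zero_mul, add_zero] at hS hb
    obtain ⟨c1, r1, hmin⟩ := wk_minorant br f hlsc hconv hbot ha0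
    set g : ℝ := u - br b c0 with hg
    have hgpos : 0 < g := by simp only [hg]; linarith
    set D : ℝ := br b c1 - r1 with hD
    set n : ℝ := max 0 ((t - D) / g + 1) with hn
    have hn0 : 0 ≤ n := le_max_left _ _
    refine ⟨c1 - n • c0, r1 - n * u, fun x => ?_, ?_⟩
    · by_cases hx : f x = ⊤
      · rw [hx]; exact le_top
      · obtain ⟨v, hv⟩ : ∃ v : ℝ, f x = (v : EReal) :=
          ⟨(f x).toReal, (EReal.coe_toReal hx (hbot x)).symm⟩
        have h1 : u < br x c0 := hS x v (le_of_eq hv)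
        have h2 : br x c1 - r1 ≤ v := by
          have := hmin x; rw [hv] at this; exact_mod_cast this
        rw [hv]
        have hbrc : br x (c1 - n • c0) = br x c1 - n * br x c0 := by
          rw [map_sub, map_smul, smul_eq_mul]
        have key : br x (c1 - n • c0) - (r1 - n * u) ≤ v := by
          rw [hbrc]
          nlinarith [mul_nonneg hn0 (sub_nonneg.mpr h1.le)]
        exact_mod_cast key
    · have hbrc : br b (c1 - n • c0) = br b c1 - n * br b c0 := by
        rw [map_sub, map_smul, smul_eq_mul]
      rw [hbrc]
      have hge : (t - D) / g + 1 ≤ n := le_max_right _ _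
      have h4 : (t - D) / g < n := by linarith
      have h5 : t - D < n * g := by
        rw [div_lt_iff₀ hgpos] at h4; linarith [h4]
      simp only [hD, hg] at h5
      nlinarith
  · -- lam > 0
    refine ⟨(-lam⁻¹) • c0, -(u / lam), fun x => ?_, ?_⟩
    · by_cases hx : f x = ⊤
      · rw [hx]; exact le_top
      · obtain ⟨v, hv⟩ : ∃ v : ℝ, f x = (v : EReal) :=
          ⟨(f x).toReal, (EReal.coe_toReal hx (hbot x)).symm⟩
        have h1 := hS x v (le_of_eq hv)
        rw [hv]
        have hbrc : br x ((-lam⁻¹) • c0) = -lam⁻¹ * br x c0 := by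
          rw [map_smul, smul_eq_mul]
        rw [hbrc]
        have hlamne : lam ≠ 0 := ne_of_gt hlampos
        have heq : -lam⁻¹ * br x c0 - -(u / lam) = (u - br x c0) / lam := by
          rw [div_eq_mul_inv, div_eq_mul_inv]; ring
        have key : -lam⁻¹ * br x c0 - -(u / lam) ≤ v := by
          rw [heq]
          exact (div_le_iff₀ hlampos).mpr (by linarith)
        exact_mod_cast key
    · have hbrc : br b ((-lam⁻¹) • c0) = -lam⁻¹ * br b c0 := by
        rw [map_smul, smul_eq_mul]
      rw [hbrc]
      have hlamne : lam ≠ 0 := ne_of_gt hlampos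
      have heq : -lam⁻¹ * br b c0 - -(u / lam) = (u - br b c0) / lam := by
        rw [div_eq_mul_inv, div_eq_mul_inv]; ring
      rw [heq]
      exact (lt_div_iff₀ hlampos).mpr (by linarith)

end minorant
section assemble2
variable (br : B →ₗ[ℝ] B →ₗ[ℝ] ℝ)

lemma ereal_le_of_forall' {x y : EReal} (h : ∀ t : ℝ, (t : EReal) < x → (t : EReal) ≤ y) :
    x ≤ y := by
  by_contra hc
  push_neg at hc
  obtain ⟨t, h1, h2⟩ := EReal.exists_between_coe_real hc
  exact absurd (h t h2) (not_le.mpr h1)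

lemma coe_le_PhiF {A : Set B} {a : B} (ha : a ∈ A) (c : B) :
    ((br c a - qQ br a : ℝ) : EReal) ≤ PhiF br A c :=
  le_iSup₂ (f := fun a' (_ : a' ∈ A) => ((br c a' - qQ br a' : ℝ) : EReal)) a ha

lemma PhiF_ne_bot {A : Set B} (hne : A.Nonempty) (c : B) : PhiF br A c ≠ ⊥ := by
  obtain ⟨a, ha⟩ := hne
  intro h
  have := coe_le_PhiF br ha c
  rw [h, le_bot_iff] at this
  exact EReal.coe_ne_bot _ this

end assemble2

/-- Φ_A^@ is the largest w(B,B)-lsc convex function majorized by q on A. -/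
theorem stmt1 [Nontrivial B] (br : B →ₗ[ℝ] B →ₗ[ℝ] ℝ)
    (hsym : ∀ x y : B, br x y = br y x)
    (A : Set B) (hA : IsQPositive br A) :
    LscW br (intrinsicConj br (PhiF br A)) ∧
    ConvexE (intrinsicConj br (PhiF br A)) ∧
    (∀ a ∈ A, intrinsicConj br (PhiF br A) a ≤ ((qQ br a : ℝ) : EReal)) ∧
    (∀ f : B → EReal, LscW br f → ConvexE f → (∀ x, f x ≠ ⊥) →
      (∀ a ∈ A, f a ≤ ((qQ br a : ℝ) : EReal)) →
      ∀ b : B, f b ≤ intrinsicConj br (PhiF br A) b) := by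
  obtain ⟨⟨a0, ha0A⟩, -⟩ := hA
  have hnbot : ∀ c, PhiF br A c ≠ ⊥ := PhiF_ne_bot br ⟨a0, ha0A⟩
  refine ⟨?_, ?_, ?_, ?_⟩
  · -- lower semicontinuity
    letI := weakTop br
    refine lowerSemicontinuous_iSup (f := fun c b => ((br c b : ℝ) : EReal) - PhiF br A c)
      fun c => ?_
    show LowerSemicontinuous fun b => ((br c b : ℝ) : EReal) - PhiF br A c
    by_cases hc : PhiF br A c = ⊤
    · have heq : (fun b => ((br c b : ℝ) : EReal) - PhiF br A c) = fun _ => (⊥ : EReal) := by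
        funext b; rw [hc, EReal.sub_top]
      rw [heq]; exact lowerSemicontinuous_const
    · obtain ⟨k, hk⟩ : ∃ k : ℝ, PhiF br A c = (k : EReal) :=
        ⟨(PhiF br A c).toReal, (EReal.coe_toReal hc (hnbot c)).symm⟩
      have heq : (fun b => ((br c b : ℝ) : EReal) - PhiF br A c)
          = fun b => ((br b c - k : ℝ) : EReal) := by
        funext b; rw [hk, hsym c b, ← EReal.coe_sub]
      rw [heq]
      exact (continuous_coe_real_ereal.comp
        ((wk_eval_cont br c).sub continuous_const)).lowerSemicontinuous
  · -- convexity
    intro x y α β hα hβ hαβ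
    refine iSup_le fun c => ?_
    by_cases hc : PhiF br A c = ⊤
    · rw [hc, EReal.sub_top]; exact bot_le
    · obtain ⟨k, hk⟩ : ∃ k : ℝ, PhiF br A c = (k : EReal) :=
        ⟨(PhiF br A c).toReal, (EReal.coe_toReal hc (hnbot c)).symm⟩
      have hterm : ∀ z : B, ((br c z : ℝ) : EReal) - PhiF br A c = ((br c z - k : ℝ) : EReal) :=
        fun z => by rw [hk, ← EReal.coe_sub]
      rw [hterm]
      have hz : br c (α • x + β • y) - k = α * (br c x - k) + β * (br c y - k) := by
        rw [map_add, map_smul, map_smul, smul_eq_mul, smul_eq_mul]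
        linear_combination (k : ℝ) * hαβ
      rw [hz, EReal.coe_add, EReal.coe_mul, EReal.coe_mul]
      have hα' : (0 : EReal) ≤ (α : EReal) := by exact_mod_cast hα
      have hβ' : (0 : EReal) ≤ (β : EReal) := by exact_mod_cast hβ
      have h1 : ((br c x - k : ℝ) : EReal) ≤ intrinsicConj br (PhiF br A) x := by
        rw [← hterm x]
        exact le_iSup (fun c' => ((br c' x : ℝ) : EReal) - PhiF br A c') c
      have h2 : ((br c y - k : ℝ) : EReal) ≤ intrinsicConj br (PhiF br A) y := by
        rw [← hterm y]
        exact le_iSup (fun c' => ((br c' y : ℝ) : EReal) - PhiF br A c') c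
      exact add_le_add (mul_le_mul_of_nonneg_left h1 hα') (mul_le_mul_of_nonneg_left h2 hβ')
  · -- majorized by q on A
    intro a ha
    refine iSup_le fun c => ?_
    calc ((br c a : ℝ) : EReal) - PhiF br A c
        ≤ ((br c a : ℝ) : EReal) - ((br c a - qQ br a : ℝ) : EReal) :=
          EReal.sub_le_sub le_rfl (coe_le_PhiF br ha c)
      _ = ((qQ br a : ℝ) : EReal) := by rw [← EReal.coe_sub]; congr 1; ring
  · -- largest such function
    intro f hlsc hconv hbot hfq b
    have hfa0 : f a0 ≠ ⊤ := by
      intro h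
      have := hfq a0 ha0A
      rw [h] at this
      exact absurd this (by simp)
    obtain ⟨v0, hv0⟩ : ∃ v0 : ℝ, f a0 = (v0 : EReal) :=
      ⟨(f a0).toReal, (EReal.coe_toReal hfa0 (hbot a0)).symm⟩
    refine ereal_le_of_forall' fun t ht => ?_
    obtain ⟨c, r, hmin, hstrict⟩ := wk_minorant_at br f hlsc hconv hbot hv0 b t ht
    have hPhi : PhiF br A c ≤ (r : EReal) := by
      refine iSup₂_le fun a ha => ?_
      have h1 : ((br a c - r : ℝ) : EReal) ≤ ((qQ br a : ℝ) : EReal) :=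
        (hmin a).trans (hfq a ha)
      have h2 : br a c - r ≤ qQ br a := by exact_mod_cast h1
      have h3 : br c a - qQ br a ≤ r := by rw [hsym]; linarith
      exact_mod_cast h3
    calc (t : EReal) ≤ ((br c b - r : ℝ) : EReal) := by
          have : t ≤ br c b - r := by rw [hsym c b]; linarith
          exact_mod_cast this
      _ ≤ ((br c b : ℝ) : EReal) - PhiF br A c := by
          rw [EReal.coe_sub]
          exact EReal.sub_le_sub le_rfl hPhi
      _ ≤ intrinsicConj br (PhiF br A) b :=
          le_iSup (fun c' => ((br c' b : ℝ) : EReal) - PhiF br A c') c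
end
end

section
/- Let A be a q-positive subset of an SSD space B, and let C be the smallest q-representable superset of A (which equals P_q(Φ_A^@)). Then Φ_C = Φ_A on B. -/
noncomputable section

variable {B : Type*} [AddCommGroup B] [Module ℝ B]

/-- If C is the smallest q-representable superset of A
(which equals P_q(Φ_A^@)), then Φ_C = Φ_A. -/
theorem stmt4 [Nontrivial B] (br : B →ₗ[ℝ] B →ₗ[ℝ] ℝ)
    (hsym : ∀ x y : B, br x y = br y x)
    (A C : Set B) (hA : IsQPositive br A)
    (hC : C = PqSet br (intrinsicConj br (PhiF br A))) :
    ∀ x : B, PhiF br C x = PhiF br A x := by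
  obtain ⟨⟨a0, ha0⟩, hpos⟩ := hA
  have hself : ∀ b : B, br b b = 2 * qQ br b := by
    intro b; simp [qQ]; try ring
  have hq : ∀ b ∈ A, ∀ c ∈ A, br b c - qQ br c ≤ qQ br b := by
    intro b hb c hc
    have h := hpos b hb c hc
    have hexp : qQ br (b - c) = qQ br b + qQ br c - br b c := by
      simp only [qQ, map_sub, LinearMap.sub_apply]
      rw [hsym c b]; ring
    rw [hexp] at h; linarith
  have hlb : ∀ (x : B), ∀ a ∈ A, ((br x a - qQ br a : ℝ) : EReal) ≤ PhiF br A x := by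
    intro x a ha
    exact le_iSup₂_of_le a ha le_rfl
  have hne_bot : ∀ x : B, PhiF br A x ≠ ⊥ := by
    intro x h
    have := hlb x a0 ha0
    rw [h] at this
    exact (EReal.coe_ne_bot _) (le_bot_iff.mp this)
  have hPhiA_eq : ∀ a ∈ A, PhiF br A a = ((qQ br a : ℝ) : EReal) := by
    intro a ha
    apply le_antisymm
    · apply iSup₂_le; intro a' ha'
      exact_mod_cast hq a ha a' ha'
    · refine le_iSup₂_of_le a ha (le_of_eq ?_)
      norm_cast
      rw [hself a]; ring
  have key : ∀ a ∈ A, ∀ c : B, ((br c a : ℝ) : EReal) - PhiF br A c ≤ ((qQ br a : ℝ) : EReal) := by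
    intro a ha c
    have hle := hlb c a ha
    by_cases htop : PhiF br A c = ⊤
    · rw [htop, EReal.sub_top]; exact bot_le
    · lift PhiF br A c to ℝ using ⟨htop, hne_bot c⟩ with t ht
      rw [← EReal.coe_sub]
      have h1 : (br c a - qQ br a : ℝ) ≤ t := by exact_mod_cast hle
      exact_mod_cast (by linarith : (br c a - t : ℝ) ≤ qQ br a)
  have hAC : A ⊆ C := by
    intro a ha
    rw [hC]
    show intrinsicConj br (PhiF br A) a = ((qQ br a : ℝ) : EReal)
    apply le_antisymm
    · exact iSup_le fun c => key a ha c
    · refine le_iSup_of_le a (le_of_eq ?_)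
      rw [hPhiA_eq a ha, ← EReal.coe_sub]
      norm_cast
      rw [hself a]; ring
  intro x
  apply le_antisymm
  · apply iSup₂_le; intro c hc
    rw [hC] at hc
    have hcc : intrinsicConj br (PhiF br A) c = ((qQ br c : ℝ) : EReal) := hc
    have hterm : ((br x c : ℝ) : EReal) - PhiF br A x ≤ ((qQ br c : ℝ) : EReal) := by
      rw [← hcc]; exact le_iSup_of_le x le_rfl
    by_cases htop : PhiF br A x = ⊤
    · rw [htop]; exact le_top
    · lift PhiF br A x to ℝ using ⟨htop, hne_bot x⟩ with t ht
      rw [← EReal.coe_sub] at hterm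
      have h1 : (br x c - t : ℝ) ≤ qQ br c := by exact_mod_cast hterm
      exact_mod_cast (by linarith : (br x c - qQ br c : ℝ) ≤ t)
  · apply iSup₂_le; intro a ha
    exact le_iSup₂_of_le a (hAC ha) le_rfl
end
end

section
/- Let A be a q-positive subset of an SSD space B. Then conv A ⊆ dom Φ_A^@ ⊆ cl_w(conv A), where conv A is the convex hull of A, dom Φ_A^@ = {b ∈ B : Φ_A^@(b) < +∞}, and cl_w denotes closure in the w(B,B) topology. -/
noncomputable section

variable {B : Type*} [AddCommGroup B] [Module ℝ B]

-- Auxiliary lemmas ------------------------------------------------------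

lemma phi_lower (br : B →ₗ[ℝ] B →ₗ[ℝ] ℝ) (A : Set B) {a : B} (ha : a ∈ A) (c : B) :
    ((br c a - qQ br a : ℝ) : EReal) ≤ PhiF br A c :=
  le_iSup₂ (f := fun a (_ : a ∈ A) => ((br c a - qQ br a : ℝ) : EReal)) a ha

lemma q_sub (br : B →ₗ[ℝ] B →ₗ[ℝ] ℝ) (hsym : ∀ x y : B, br x y = br y x) (x z : B) :
    qQ br (x - z) = qQ br x + qQ br z - br x z := by
  unfold qQ
  simp only [map_sub, LinearMap.sub_apply]
  rw [hsym z x]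
  ring

lemma sep_weak (br : B →ₗ[ℝ] B →ₗ[ℝ] ℝ) {C : Set B} (hC : Convex ℝ C) {b : B}
    (hb : b ∉ @closure B (weakTop br) C) :
    ∃ y : B, ∃ u : ℝ, (∀ x ∈ C, br x y < u) ∧ u < br b y := by
  classical
  set T : B → (B → ℝ) := fun x y => br x y with hTdef
  have htop : weakTop br = TopologicalSpace.induced T Pi.topologicalSpace := by
    simp only [weakTop, Pi.topologicalSpace, induced_iInf, induced_compose]
    rfl
  rw [htop] at hb
  rw [closure_induced] at hb
  rw [mem_closure_iff] at hb
  push_neg at hb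
  obtain ⟨O, hO, hbO, hOC⟩ := hb
  obtain ⟨I, u, hu, hsub⟩ := (isOpen_pi_iff.1 hO) _ hbO
  haveI : Fintype ↥(I : Set B) := I.finite_toSet.fintype
  set L : B →ₗ[ℝ] (↥(I : Set B) → ℝ) :=
    LinearMap.pi (fun i : ↥(I : Set B) => br.flip (i : B)) with hLdef
  set D : Set (↥(I : Set B) → ℝ) := L '' C with hDdef
  have hbD : L b ∉ closure D := by
    intro hmem
    have hV : IsOpen (Set.univ.pi fun i : ↥(I : Set B) => u (i : B)) :=
      isOpen_set_pi Set.finite_univ (fun i _ => (hu i i.2).1)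
    have hbV : L b ∈ Set.univ.pi fun i : ↥(I : Set B) => u (i : B) :=
      fun i _ => (hu i i.2).2
    obtain ⟨z, hzV, hzD⟩ := mem_closure_iff.1 hmem _ hV hbV
    obtain ⟨c, hcC, rfl⟩ := hzD
    have hTc : T c ∈ (I : Set B).pi u := by
      intro i hi
      exact hzV ⟨i, hi⟩ (Set.mem_univ _)
    have hcontra : T c ∈ O ∩ T '' C := ⟨hsub hTc, ⟨c, hcC, rfl⟩⟩
    rw [hOC] at hcontra
    exact hcontra
  obtain ⟨f, v, hfD, hfb⟩ := geometric_hahn_banach_closed_point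
    ((hC.linear_image L).closure) isClosed_closure hbD
  have key : ∀ x : B, br x (∑ i : ↥(I : Set B), f ((Pi.single i 1 : ↥(I : Set B) → ℝ)) • (i : B)) = f (L x) := by
    intro x
    have hf : ∀ w : ↥(I : Set B) → ℝ, f w = ∑ i : ↥(I : Set B), w i * f ((Pi.single i 1 : ↥(I : Set B) → ℝ)) := by
      intro w
      conv_lhs => rw [← Finset.univ_sum_single w]
      rw [map_sum]
      refine Finset.sum_congr rfl fun i _ => ?_
      have hsingle : Pi.single i (w i) = w i • (Pi.single i 1 : ↥(I : Set B) → ℝ) := by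
        ext j
        by_cases h : j = i <;> simp [Pi.single_apply, h]
      rw [hsingle, map_smul, smul_eq_mul]
    rw [hf (L x), map_sum]
    refine Finset.sum_congr rfl fun i _ => ?_
    rw [map_smul, smul_eq_mul, mul_comm]
    rfl
  refine ⟨∑ i : ↥(I : Set B), f ((Pi.single i 1 : ↥(I : Set B) → ℝ)) • (i : B), v, ?_, ?_⟩
  · intro x hx
    rw [key x]
    exact hfD (L x) (subset_closure ⟨x, hx, rfl⟩)
  · rw [key b]
    exact hfb

lemma ereal_exists_coe {x : EReal} (hb : x ≠ ⊥) (ht : x ≠ ⊤) : ∃ p : ℝ, x = p := by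
  lift x to ℝ using ⟨ht, hb⟩
  exact ⟨x, rfl⟩

/-- conv A ⊆ dom Φ_A^@ ⊆ cl_w(conv A). -/
theorem stmt5 [Nontrivial B] (br : B →ₗ[ℝ] B →ₗ[ℝ] ℝ)
    (hsym : ∀ x y : B, br x y = br y x)
    (A : Set B) (hA : IsQPositive br A) :
    convexHull ℝ A ⊆ {b : B | intrinsicConj br (PhiF br A) b ≠ ⊤} ∧
    {b : B | intrinsicConj br (PhiF br A) b ≠ ⊤} ⊆
      @closure B (weakTop br) (convexHull ℝ A) := by
  obtain ⟨⟨a₀, ha₀⟩, hpos⟩ := hA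
  have hq : ∀ x z, x ∈ A → z ∈ A → br x z - qQ br z ≤ qQ br x := by
    intro x z hx hz
    have h0 := hpos x hx z hz
    rw [q_sub br hsym] at h0
    linarith
  have phi_ne_bot : ∀ c : B, PhiF br A c ≠ ⊥ := by
    intro c h
    have := phi_lower br A ha₀ c
    rw [h] at this
    exact absurd this (not_le_of_gt (EReal.bot_lt_coe _))
  constructor
  · -- conv A ⊆ dom
    set S : Set B := {b : B | ∃ r : ℝ, ∀ c : B,
        ((br c b : ℝ) : EReal) - PhiF br A c ≤ (r : EReal)} with hSdef
    have hAS : A ⊆ S := by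
      intro a ha
      refine ⟨qQ br a, fun c => ?_⟩
      calc ((br c a : ℝ) : EReal) - PhiF br A c
          ≤ ((br c a : ℝ) : EReal) - ((br c a - qQ br a : ℝ) : EReal) :=
            EReal.sub_le_sub le_rfl (phi_lower br A ha c)
        _ = ((qQ br a : ℝ) : EReal) := by
            rw [← EReal.coe_sub, EReal.coe_eq_coe_iff]
            ring
    have hSconv : Convex ℝ S := by
      intro b₁ hb₁ b₂ hb₂ α β hα hβ hαβ
      obtain ⟨r₁, h₁⟩ := hb₁
      obtain ⟨r₂, h₂⟩ := hb₂
      refine ⟨α * r₁ + β * r₂, fun c => ?_⟩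
      by_cases hPt : PhiF br A c = ⊤
      · rw [hPt, EReal.sub_top]
        exact bot_le
      · obtain ⟨p, hp⟩ := ereal_exists_coe (phi_ne_bot c) hPt
        have e₁ : br c b₁ - p ≤ r₁ := by
          have := h₁ c
          rw [hp, ← EReal.coe_sub, EReal.coe_le_coe_iff] at this
          exact this
        have e₂ : br c b₂ - p ≤ r₂ := by
          have := h₂ c
          rw [hp, ← EReal.coe_sub, EReal.coe_le_coe_iff] at this
          exact this
        have hval : br c (α • b₁ + β • b₂) = α * br c b₁ + β * br c b₂ := by
          simp [map_add, map_smul]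
        rw [hp, ← EReal.coe_sub, EReal.coe_le_coe_iff, hval]
        have hps : α * p + β * p = p := by rw [← add_mul, hαβ, one_mul]
        linarith [mul_le_mul_of_nonneg_left e₁ hα, mul_le_mul_of_nonneg_left e₂ hβ]
    intro b hb
    obtain ⟨r, hr⟩ := convexHull_min hAS hSconv hb
    have : intrinsicConj br (PhiF br A) b ≤ (r : EReal) := iSup_le hr
    exact ne_top_of_le_ne_top (EReal.coe_ne_top r) this
  · -- dom ⊆ weak closure of conv A
    intro b hb
    by_contra hcl
    obtain ⟨y, u, h1, h2⟩ := sep_weak br (convex_convexHull ℝ A) hcl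
    have hd : 0 < br b y - u := by linarith
    have hforall : ∀ r : ℝ, (r : EReal) ≤ intrinsicConj br (PhiF br A) b := by
      intro r
      set lam : ℝ := max 0 ((r - (br a₀ b - qQ br a₀)) / (br b y - u)) with hlamdef
      have hlam0 : 0 ≤ lam := le_max_left _ _
      set c : B := a₀ + lam • y with hcdef
      have hcb : br c b = br a₀ b + lam * br b y := by
        simp [hcdef, map_add, map_smul, LinearMap.add_apply, LinearMap.smul_apply,
          smul_eq_mul, hsym y b]
      have hPhi : PhiF br A c ≤ ((qQ br a₀ + lam * u : ℝ) : EReal) := by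
        refine iSup₂_le fun a ha => ?_
        rw [EReal.coe_le_coe_iff]
        have hca : br c a = br a₀ a + lam * br y a := by
          simp [hcdef, map_add, map_smul, LinearMap.add_apply, LinearMap.smul_apply,
            smul_eq_mul]
        have h3 : br a₀ a - qQ br a ≤ qQ br a₀ := hq a₀ a ha₀ ha
        have h4 : br y a ≤ u := by
          rw [hsym y a]
          exact (h1 a (subset_convexHull ℝ A ha)).le
        have h5 : lam * br y a ≤ lam * u := mul_le_mul_of_nonneg_left h4 hlam0
        rw [hca]
        linarith
      have hle1 : ((br c b - (qQ br a₀ + lam * u) : ℝ) : EReal)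
          ≤ ((br c b : ℝ) : EReal) - PhiF br A c := by
        rw [EReal.coe_sub]
        exact EReal.sub_le_sub le_rfl hPhi
      have hle2 : ((br c b : ℝ) : EReal) - PhiF br A c ≤ intrinsicConj br (PhiF br A) b :=
        le_iSup (fun c => ((br c b : ℝ) : EReal) - PhiF br A c) c
      have hr : r ≤ br c b - (qQ br a₀ + lam * u) := by
        have hquot : (r - (br a₀ b - qQ br a₀)) / (br b y - u) ≤ lam := le_max_right _ _
        have := (div_le_iff₀ hd).1 hquot
        rw [hcb]
        nlinarith
      calc (r : EReal) ≤ ((br c b - (qQ br a₀ + lam * u) : ℝ) : EReal) :=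
            EReal.coe_le_coe_iff.2 hr
        _ ≤ ((br c b : ℝ) : EReal) - PhiF br A c := hle1
        _ ≤ intrinsicConj br (PhiF br A) b := hle2
    have hnb : intrinsicConj br (PhiF br A) b ≠ ⊥ := by
      intro h
      have := hforall 0
      rw [h] at this
      exact absurd this (not_le_of_gt (EReal.bot_lt_coe _))
    obtain ⟨p, hp⟩ := ereal_exists_coe hnb hb
    have := hforall (p + 1)
    rw [hp, EReal.coe_le_coe_iff] at this
    linarith
end
end

section
/- Let B be an SSD space and f : B → ℝ ∪ {+∞} a w(B,B)-lower semicontinuous proper convex function such that G_f ≠ ∅. Then G_f is q-representable. -/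
noncomputable section

variable {B : Type*} [AddCommGroup B] [Module ℝ B]

-- ===== auxiliary lemmas =====

lemma ereal_mul_lt_mul_left {r : ℝ} (hr : 0 < r) (a b : EReal) :
    (r : EReal) * a < (r : EReal) * b ↔ a < b := by
  constructor
  · intro h
    by_contra hba
    push_neg at hba
    exact absurd (mul_le_mul_of_nonneg_left hba (by exact_mod_cast hr.le)) h.not_ge
  · intro h
    refine lt_of_le_of_ne (mul_le_mul_of_nonneg_left h.le (by exact_mod_cast hr.le)) ?_
    intro heq
    have : ((r⁻¹ : ℝ) : EReal) * ((r : EReal) * a) = ((r⁻¹ : ℝ) : EReal) * ((r : EReal) * b) := by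
      rw [heq]
    rw [← mul_assoc, ← mul_assoc, ← EReal.coe_mul, inv_mul_cancel₀ hr.ne', EReal.coe_one,
      one_mul, one_mul] at this
    exact h.ne this

lemma ereal_mul_left_inj {r : ℝ} (hr : r ≠ 0) {a b : EReal}
    (h : (r : EReal) * a = (r : EReal) * b) : a = b := by
  have : ((r⁻¹ : ℝ) : EReal) * ((r : EReal) * a) = ((r⁻¹ : ℝ) : EReal) * ((r : EReal) * b) := by
    rw [h]
  rwa [← mul_assoc, ← mul_assoc, ← EReal.coe_mul, inv_mul_cancel₀ hr, EReal.coe_one,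
    one_mul, one_mul] at this

lemma ereal_mul_ne_bot {r : ℝ} (hr : 0 ≤ r) {a : EReal} (ha : a ≠ ⊥) :
    (r : EReal) * a ≠ ⊥ := by
  rcases eq_or_lt_of_le hr with h0 | hpos
  · simp [← h0]
  induction a with
  | bot => exact absurd rfl ha
  | coe x => rw [← EReal.coe_mul]; exact EReal.coe_ne_bot _
  | top =>
    rw [EReal.mul_top_of_pos (by exact_mod_cast hpos)]
    exact (bot_lt_top).ne'

lemma ereal_coe_mul_add {r : ℝ} (hr : 0 ≤ r) {a b : EReal} (ha : a ≠ ⊥) (hb : b ≠ ⊥) :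
    (r : EReal) * (a + b) = (r : EReal) * a + (r : EReal) * b := by
  rcases eq_or_lt_of_le hr with h0 | hpos
  · simp [← h0]
  have hr' : (0 : EReal) < (r : EReal) := by exact_mod_cast hpos
  induction a with
  | bot => exact absurd rfl ha
  | coe x =>
    induction b with
    | bot => exact absurd rfl hb
    | coe y => norm_cast; ring
    | top =>
      rw [EReal.add_top_of_ne_bot (by simp), EReal.mul_top_of_pos hr',
        EReal.add_top_of_ne_bot (by rw [← EReal.coe_mul]; exact EReal.coe_ne_bot _)]
  | top =>
    rw [EReal.top_add_of_ne_bot hb, EReal.mul_top_of_pos hr',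
      EReal.top_add_of_ne_bot (ereal_mul_ne_bot hr hb)]


/-- If f is a w(B,B)-lsc proper convex function with G_f ≠ ∅,
then G_f is q-representable. -/
theorem stmt6 [Nontrivial B] (br : B →ₗ[ℝ] B →ₗ[ℝ] ℝ)
    (hsym : ∀ x y : B, br x y = br y x)
    (f : B → EReal) (hlsc : LscW br f) (hconv : ConvexE f)
    (hbot : ∀ x, f x ≠ ⊥) (htop : ∃ x, f x ≠ ⊤)
    (hne : (GSet br f).Nonempty) :
    IsQRepresentable br (GSet br f) := by
  classical
  obtain ⟨x₀, hx₀⟩ := htop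
  obtain ⟨r₀, hr₀⟩ : ∃ r : ℝ, f x₀ = (r : EReal) := by
    cases h : f x₀ with
    | bot => exact absurd h (hbot x₀)
    | coe t => exact ⟨t, rfl⟩
    | top => exact absurd h hx₀
  set φ : B → EReal := intrinsicConj br f with hφ
  have hφbot : ∀ b, φ b ≠ ⊥ := by
    intro b h
    have hle : ((br x₀ b - r₀ : ℝ) : EReal) ≤ φ b := by
      have := le_iSup (fun c => ((br c b : ℝ) : EReal) - f c) x₀
      rwa [hr₀, ← EReal.coe_sub] at this
    rw [h] at hle
    exact absurd (le_bot_iff.mp hle) (EReal.coe_ne_bot _)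
  set s : B → EReal := fun b => f b + φ b with hs
  have hsbot : ∀ b, s b ≠ ⊥ := by
    intro b h
    rcases EReal.add_eq_bot_iff.mp h with h' | h'
    · exact hbot b h'
    · exact hφbot b h'
  -- Fenchel-Young
  have hFY : ∀ b, ((br b b : ℝ) : EReal) ≤ s b := by
    intro b
    cases hfb : f b with
    | bot => exact absurd hfb (hbot b)
    | coe t =>
      have h1 : ((br b b - t : ℝ) : EReal) ≤ φ b := by
        have := le_iSup (fun c => ((br c b : ℝ) : EReal) - f c) b
        rwa [hfb, ← EReal.coe_sub] at this
      calc ((br b b : ℝ) : EReal) = (t : EReal) + ((br b b - t : ℝ) : EReal) := by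
            norm_cast; ring
        _ ≤ (t : EReal) + φ b := add_le_add_right h1 _
        _ = s b := by rw [hs]; simp only []; rw [hfb]
    | top =>
      have : s b = ⊤ := by
        rw [hs]; simp only []; rw [hfb, EReal.top_add_of_ne_bot (hφbot b)]
      rw [this]; exact le_top
  -- lower semicontinuity of φ
  have hφlsc : @LowerSemicontinuous B EReal (weakTop br) _ φ := by
    letI : TopologicalSpace B := weakTop br
    have hcont : ∀ c : B, Continuous fun x : B => br x c := by
      intro c
      exact continuous_iInf_dom (continuous_induced_dom)
    apply lowerSemicontinuous_iSup
    intro c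
    cases hfc : f c with
    | bot => exact absurd hfc (hbot c)
    | coe t =>
      have heq : (fun b => ((br c b : ℝ) : EReal) - ((t : ℝ) : EReal))
          = fun b => ((br b c - t : ℝ) : EReal) := by
        funext b
        rw [hsym c b, EReal.coe_sub]
      rw [heq]
      exact (continuous_coe_real_ereal.comp ((hcont c).sub continuous_const)).lowerSemicontinuous
    | top =>
      have heq : (fun b => ((br c b : ℝ) : EReal) - (⊤ : EReal)) = fun _ => (⊥ : EReal) := by
        funext b
        rw [EReal.sub_top]
      rw [heq]
      exact lowerSemicontinuous_const
  -- lower semicontinuity of s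
  have hslsc : @LowerSemicontinuous B EReal (weakTop br) _ s := by
    letI : TopologicalSpace B := weakTop br
    exact LowerSemicontinuous.add' hlsc hφlsc fun x =>
      EReal.continuousAt_add (Or.inr (hφbot x)) (Or.inl (hbot x))
  -- convexity of φ
  have hφconv : ConvexE φ := by
    intro x y α β hα hβ hαβ
    refine iSup_le fun c => ?_
    cases hfc : f c with
    | bot => exact absurd hfc (hbot c)
    | coe t =>
      have hbr : br c (α • x + β • y) = α * br c x + β * br c y := by
        simp [map_add, map_smul, smul_eq_mul]
      have key : ((br c (α • x + β • y) : ℝ) : EReal) - ((t : ℝ) : EReal)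
          = ((α * (br c x - t) + β * (br c y - t) : ℝ) : EReal) := by
        rw [← EReal.coe_sub]
        congr 1
        rw [hbr]
        linear_combination t * hαβ
      rw [key, EReal.coe_add, EReal.coe_mul, EReal.coe_mul]
      have h1 : ((br c x - t : ℝ) : EReal) ≤ φ x := by
        have := le_iSup (fun c' => ((br c' x : ℝ) : EReal) - f c') c
        rwa [hfc, ← EReal.coe_sub] at this
      have h2 : ((br c y - t : ℝ) : EReal) ≤ φ y := by
        have := le_iSup (fun c' => ((br c' y : ℝ) : EReal) - f c') c
        rwa [hfc, ← EReal.coe_sub] at this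
      exact add_le_add (mul_le_mul_of_nonneg_left h1 (by exact_mod_cast hα))
        (mul_le_mul_of_nonneg_left h2 (by exact_mod_cast hβ))
    | top =>
      rw [EReal.sub_top]
      exact bot_le
  -- the representing function
  refine ⟨fun b => ((1/2 : ℝ) : EReal) * s b, ?_, ?_, ?_, ?_, ?_⟩
  · -- lsc
    intro x y hy
    have hhalf : (0:ℝ) < 1/2 := by norm_num
    have h2 : ∀ z : EReal, ((1/2 : ℝ) : EReal) * (((2:ℝ) : EReal) * z) = z := by
      intro z
      rw [← mul_assoc, ← EReal.coe_mul]
      norm_num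
    have hy' : ((1/2 : ℝ) : EReal) * (((2:ℝ) : EReal) * y) < ((1/2 : ℝ) : EReal) * s x := by
      rw [h2]; exact hy
    have hlt : ((2:ℝ) : EReal) * y < s x := (ereal_mul_lt_mul_left hhalf _ _).mp hy'
    filter_upwards [hslsc x _ hlt] with z hz
    calc y = ((1/2 : ℝ) : EReal) * (((2:ℝ) : EReal) * y) := (h2 y).symm
      _ < ((1/2 : ℝ) : EReal) * s z := (ereal_mul_lt_mul_left hhalf _ _).mpr hz
  · -- convexity
    intro x y α β hα hβ hαβ
    have hαE : (0:EReal) ≤ (α : EReal) := by exact_mod_cast hα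
    have hβE : (0:EReal) ≤ (β : EReal) := by exact_mod_cast hβ
    have hhalf : (0:ℝ) ≤ 1/2 := by norm_num
    have hmono : s (α • x + β • y) ≤
        ((α : EReal) * f x + (β : EReal) * f y) + ((α : EReal) * φ x + (β : EReal) * φ y) :=
      add_le_add (hconv x y α β hα hβ hαβ) (hφconv x y α β hα hβ hαβ)
    have step1 : ((1/2 : ℝ) : EReal) * s (α • x + β • y) ≤
        ((1/2 : ℝ) : EReal) * (((α : EReal) * f x + (β : EReal) * f y)
          + ((α : EReal) * φ x + (β : EReal) * φ y)) :=
      mul_le_mul_of_nonneg_left hmono (by exact_mod_cast hhalf)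
    refine step1.trans (le_of_eq ?_)
    show ((1/2 : ℝ) : EReal) * (((α : EReal) * f x + (β : EReal) * f y)
          + ((α : EReal) * φ x + (β : EReal) * φ y))
        = (α : EReal) * (((1/2 : ℝ) : EReal) * (f x + φ x))
          + (β : EReal) * (((1/2 : ℝ) : EReal) * (f y + φ y))
    have hfxb := ereal_mul_ne_bot hα (hbot x)
    have hfyb := ereal_mul_ne_bot hβ (hbot y)
    have hφxb := ereal_mul_ne_bot hα (hφbot x)
    have hφyb := ereal_mul_ne_bot hβ (hφbot y)
    rw [ereal_coe_mul_add hhalf (by rw [ne_eq, EReal.add_eq_bot_iff]; push_neg; exact ⟨hfxb, hfyb⟩)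
        (by rw [ne_eq, EReal.add_eq_bot_iff]; push_neg; exact ⟨hφxb, hφyb⟩),
      ereal_coe_mul_add hhalf hfxb hfyb, ereal_coe_mul_add hhalf hφxb hφyb,
      ereal_coe_mul_add hhalf (hbot x) (hφbot x),
      ereal_coe_mul_add hhalf (hbot y) (hφbot y),
      ereal_coe_mul_add hα (ereal_mul_ne_bot hhalf (hbot x)) (ereal_mul_ne_bot hhalf (hφbot x)),
      ereal_coe_mul_add hβ (ereal_mul_ne_bot hhalf (hbot y)) (ereal_mul_ne_bot hhalf (hφbot y))]
    rw [mul_left_comm ((1/2:ℝ):EReal) ((α:ℝ):EReal) (f x),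
      mul_left_comm ((1/2:ℝ):EReal) ((β:ℝ):EReal) (f y),
      mul_left_comm ((1/2:ℝ):EReal) ((α:ℝ):EReal) (φ x),
      mul_left_comm ((1/2:ℝ):EReal) ((β:ℝ):EReal) (φ y)]
    abel
  · -- properness
    obtain ⟨b₀, hb₀⟩ := hne
    have hsb : s b₀ = ((br b₀ b₀ : ℝ) : EReal) := hb₀
    refine ⟨b₀, ?_⟩
    show ((1/2 : ℝ) : EReal) * s b₀ ≠ ⊤
    rw [hsb, ← EReal.coe_mul]
    exact EReal.coe_ne_top _
  · -- minorizes q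
    intro x
    have : ((qQ br x : ℝ) : EReal) = ((1/2 : ℝ) : EReal) * ((br x x : ℝ) : EReal) := by
      rw [qQ, EReal.coe_mul]
    rw [this]
    exact mul_le_mul_of_nonneg_left (hFY x) (by norm_num)
  · -- PqSet = GSet
    ext b
    simp only [PqSet, GSet, Set.mem_setOf_eq]
    constructor
    · intro h
      have : ((1/2 : ℝ) : EReal) * s b = ((1/2 : ℝ) : EReal) * ((br b b : ℝ) : EReal) := by
        rw [h, qQ, EReal.coe_mul]
      exact ereal_mul_left_inj (by norm_num) this
    · intro h
      show ((1/2 : ℝ) : EReal) * s b = _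
      rw [hs]; simp only []
      rw [h, qQ, EReal.coe_mul]
end
end

section
/- Let A be a q-positive subset of an SSD space B such that Φ_A(b) ≥ q(b) for every b in the w(B,B)-closure of the convex hull of A. Then G_{Φ_A} = P_q(Φ_A^@). -/
noncomputable section

variable {B : Type*} [AddCommGroup B] [Module ℝ B]

section MyAux

variable (br : B →ₗ[ℝ] B →ₗ[ℝ] ℝ)

lemma brle_aux (hsym : ∀ x y : B, br x y = br y x) {A : Set B} (hA : IsQPositive br A)
    {a c : B} (ha : a ∈ A) (hc : c ∈ A) : br a c - qQ br c ≤ qQ br a := by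
  have h := hA.2 a ha c hc
  simp only [qQ, map_sub, LinearMap.sub_apply] at h ⊢
  have hs := hsym a c
  linarith

lemma le_phi_aux {A : Set B} {x a : B} (ha : a ∈ A) :
    ((br x a - qQ br a : ℝ) : EReal) ≤ PhiF br A x :=
  le_iSup₂ (f := fun a (_ : a ∈ A) => ((br x a - qQ br a : ℝ) : EReal)) a ha

lemma phi_eq_aux (hsym : ∀ x y : B, br x y = br y x) {A : Set B} (hA : IsQPositive br A)
    {a : B} (ha : a ∈ A) : PhiF br A a = ((qQ br a : ℝ) : EReal) := by
  refine le_antisymm (iSup₂_le fun c hc => ?_) ?_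
  · exact_mod_cast brle_aux br hsym hA ha hc
  · have h := le_phi_aux br (x := a) ha
    have : br a a - qQ br a = qQ br a := by simp [qQ]; ring
    rwa [this] at h

lemma phi_ne_bot_aux {A : Set B} (hA : IsQPositive br A) (x : B) : PhiF br A x ≠ ⊥ := by
  obtain ⟨a₀, ha₀⟩ := hA.1
  exact ((EReal.bot_lt_coe _).trans_le (le_phi_aux br (x := x) ha₀)).ne'

lemma le_conj_aux (f : B → EReal) (c b : B) :
    ((br c b : ℝ) : EReal) - f c ≤ intrinsicConj br f b :=
  le_iSup (fun c => ((br c b : ℝ) : EReal) - f c) c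

lemma conj_ge_phi_aux (hsym : ∀ x y : B, br x y = br y x) {A : Set B} (hA : IsQPositive br A)
    (b : B) : PhiF br A b ≤ intrinsicConj br (PhiF br A) b := by
  refine iSup₂_le fun a ha => ?_
  have h1 := le_conj_aux br (PhiF br A) a b
  rw [phi_eq_aux br hsym hA ha] at h1
  have h2 : (br b a - qQ br a : ℝ) = br a b - qQ br a := by rw [hsym]
  rw [h2, EReal.coe_sub]
  exact h1

lemma conj_ne_bot_aux (hsym : ∀ x y : B, br x y = br y x) {A : Set B} (hA : IsQPositive br A)
    (b : B) : intrinsicConj br (PhiF br A) b ≠ ⊥ := by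
  obtain ⟨a₀, ha₀⟩ := hA.1
  have h1 := le_conj_aux br (PhiF br A) a₀ b
  rw [phi_eq_aux br hsym hA ha₀, ← EReal.coe_sub] at h1
  exact ((EReal.bot_lt_coe _).trans_le h1).ne'

lemma conj_ge_q_aux (hsym : ∀ x y : B, br x y = br y x) {A : Set B} (hA : IsQPositive br A)
    (b : B) : ((qQ br b : ℝ) : EReal) ≤ intrinsicConj br (PhiF br A) b := by
  by_cases htop : intrinsicConj br (PhiF br A) b = ⊤
  · rw [htop]; exact le_top
  have hphile := conj_ge_phi_aux br hsym hA b
  have hphitop : PhiF br A b ≠ ⊤ := by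
    intro h
    exact htop (top_le_iff.1 (h ▸ hphile))
  have hs : PhiF br A b = ((PhiF br A b).toReal : EReal) :=
    (EReal.coe_toReal hphitop (phi_ne_bot_aux br hA b)).symm
  have hr : intrinsicConj br (PhiF br A) b
      = ((intrinsicConj br (PhiF br A) b).toReal : EReal) :=
    (EReal.coe_toReal htop (conj_ne_bot_aux br hsym hA b)).symm
  set s := (PhiF br A b).toReal
  set r := (intrinsicConj br (PhiF br A) b).toReal
  have h5 := le_conj_aux br (PhiF br A) b b
  rw [hs, hr, ← EReal.coe_sub, EReal.coe_le_coe_iff] at h5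
  rw [hs, hr, EReal.coe_le_coe_iff] at hphile
  rw [hr, EReal.coe_le_coe_iff]
  simp only [qQ] at *
  linarith

end MyAux
lemma conj_top_of_not_mem (br : B →ₗ[ℝ] B →ₗ[ℝ] ℝ)
    (hsym : ∀ x y : B, br x y = br y x) {A : Set B} (hA : IsQPositive br A)
    {b : B} (hb : b ∉ @closure B (weakTop br) (convexHull ℝ A)) :
    intrinsicConj br (PhiF br A) b = ⊤ := by
  classical
  obtain ⟨a₀, ha₀⟩ := hA.1
  set S := convexHull ℝ A with hS
  -- Sᶜ is a weak neighborhood of b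
  have hU : Sᶜ ∈ @nhds B (weakTop br) b := by
    letI := weakTop br
    exact mem_nhds_iff.mpr ⟨(closure S)ᶜ, Set.compl_subset_compl.mpr subset_closure,
      isOpen_compl_iff.mpr isClosed_closure, hb⟩
  have e : @nhds B (weakTop br) b
      = ⨅ d : B, Filter.comap (fun x => br x d) (nhds (br b d)) := by
    unfold weakTop; rw [nhds_iInf]; simp only [nhds_induced]
  rw [e, Filter.mem_iInf] at hU
  obtain ⟨I, hIfin, V, hV, hVint⟩ := hU
  haveI : Fintype I := hIfin.fintype
  haveI hIne : Nonempty I := by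
    by_contra h
    rw [not_nonempty_iff] at h
    rw [Set.iInter_of_empty] at hVint
    have hmem : a₀ ∈ S := subset_convexHull ℝ A ha₀
    have : a₀ ∈ Sᶜ := hVint ▸ Set.mem_univ a₀
    exact this hmem
  have key : ∀ i : I, ∃ ε : ℝ, 0 < ε ∧ ∀ x : B, |br x i - br b i| < ε → x ∈ V i := by
    intro i
    obtain ⟨W, hW, hpre⟩ := Filter.mem_comap.mp (hV i)
    obtain ⟨ε, hε, hball⟩ := Metric.mem_nhds_iff.mp hW
    exact ⟨ε, hε, fun x hx => hpre (hball (by simpa [Real.dist_eq] using hx))⟩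
  choose ε hεpos hεV using key
  set ε₀ := Finset.univ.inf' Finset.univ_nonempty ε with hε₀
  have hε₀pos : 0 < ε₀ := Finset.lt_inf'_iff _ |>.mpr fun i _ => hεpos i
  have hε₀le : ∀ i : I, ε₀ ≤ ε i := fun i => Finset.inf'_le _ (Finset.mem_univ i)
  -- the linear map into the finite-dimensional space
  set Tl : B →ₗ[ℝ] (I → ℝ) := LinearMap.pi (fun i : I => br.flip (i : B)) with hTl
  have hTl_apply : ∀ (x : B) (i : I), Tl x i = br x i := fun x i => rfl
  have hsep : ∀ y ∈ Tl '' S, ε₀ ≤ dist (Tl b) y := by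
    rintro _ ⟨x, hxS, rfl⟩
    have hx : x ∉ Sᶜ := fun h => h hxS
    simp only [hVint, Set.mem_iInter, not_forall] at hx
    obtain ⟨i, hi⟩ := hx
    have h1 : ε i ≤ |br x i - br b i| := le_of_not_gt fun h => hi (hεV i x h)
    calc ε₀ ≤ ε i := hε₀le i
      _ ≤ |br x ↑i - br b ↑i| := h1
      _ = dist (Tl x i) (Tl b i) := by rw [Real.dist_eq, hTl_apply, hTl_apply]
      _ ≤ dist (Tl x) (Tl b) := dist_le_pi_dist _ _ i
      _ = dist (Tl b) (Tl x) := dist_comm _ _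
  have hTbnotin : Tl b ∉ closure (Tl '' S) := by
    intro h
    obtain ⟨y, hyS, hyd⟩ := Metric.mem_closure_iff.mp h ε₀ hε₀pos
    exact absurd hyd (not_lt.mpr (hsep y hyS))
  have hconv : Convex ℝ (closure (Tl '' S)) := ((convex_convexHull ℝ A).linear_image Tl).closure
  obtain ⟨f, u, hfb, hfy⟩ := geometric_hahn_banach_point_closed hconv isClosed_closure hTbnotin
  -- the separating vector
  set e0 : I → (I → ℝ) := fun i => fun j => if i = j then (1 : ℝ) else 0 with he0
  set dstar : B := ∑ i : I, f (e0 i) • (i : B) with hdstar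
  have hfT : ∀ x : B, br x dstar = f (Tl x) := by
    intro x
    have h2 : f (Tl x) = ∑ i : I, Tl x i * f (e0 i) := by
      conv_lhs => rw [pi_eq_sum_univ (Tl x)]
      rw [map_sum]
      exact Finset.sum_congr rfl fun i _ => by rw [map_smul]; rfl
    have h3 : br x dstar = ∑ i : I, f (e0 i) * br x i := by
      rw [hdstar, map_sum]
      exact Finset.sum_congr rfl fun i _ => by rw [map_smul]; rfl
    rw [h2, h3]
    exact Finset.sum_congr rfl fun i _ => by rw [hTl_apply, mul_comm]
  have hb_lt : br b dstar < u := by rw [hfT]; exact hfb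
  have ha_gt : ∀ a ∈ A, u < br a dstar := fun a ha => by
    rw [hfT]
    exact hfy _ (subset_closure ⟨a, subset_convexHull ℝ A ha, rfl⟩)
  -- pass to e := -dstar and m := -u
  have hbe : -u < br b (-dstar) := by
    rw [map_neg]; exact neg_lt_neg hb_lt
  have hae : ∀ a ∈ A, br a (-dstar) < -u := fun a ha => by
    rw [map_neg]; exact neg_lt_neg (ha_gt a ha)
  set eV : B := -dstar with heV
  set m : ℝ := -u with hm
  have hδpos : 0 < br eV b - m := by
    rw [hsym eV b]; exact sub_pos.mpr hbe
  -- bound on Φ along the ray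
  have hPhiBound : ∀ t : ℝ, 0 ≤ t →
      PhiF br A (a₀ + t • eV) ≤ ((qQ br a₀ + t * m : ℝ) : EReal) := by
    intro t ht
    refine iSup₂_le fun a ha => ?_
    rw [EReal.coe_le_coe_iff]
    have h1 : br a₀ a - qQ br a ≤ qQ br a₀ := brle_aux br hsym hA ha₀ ha
    have h2 : br eV a ≤ m := by rw [hsym eV a]; exact (hae a ha).le
    have h4 : br (a₀ + t • eV) a = br a₀ a + t * br eV a := by
      simp [map_add, map_smul, LinearMap.add_apply, LinearMap.smul_apply, smul_eq_mul]
    rw [h4]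
    have h5 : t * br eV a ≤ t * m := mul_le_mul_of_nonneg_left h2 ht
    linarith
  -- conclude the conjugate is +∞
  rw [EReal.eq_top_iff_forall_lt]
  intro M
  set C : ℝ := br a₀ b - qQ br a₀ with hC
  set δ : ℝ := br eV b - m with hδ
  set t : ℝ := max ((M + 1 - C) / δ) 0 with htdef
  have ht0 : 0 ≤ t := le_max_right _ _
  set c : B := a₀ + t • eV with hc
  have hΦub := hPhiBound t ht0
  have hΦnb : PhiF br A c ≠ ⊥ := phi_ne_bot_aux br hA c
  have hΦnt : PhiF br A c ≠ ⊤ := by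
    intro h
    rw [h] at hΦub
    exact (EReal.coe_lt_top _).not_ge (top_le_iff.mpr rfl |>.trans hΦub)
  have hs : PhiF br A c = ((PhiF br A c).toReal : EReal) := (EReal.coe_toReal hΦnt hΦnb).symm
  set s : ℝ := (PhiF br A c).toReal with hsd
  have hsle : s ≤ qQ br a₀ + t * m := by
    rw [hs, EReal.coe_le_coe_iff] at hΦub
    exact hΦub
  have hterm : ((br c b - s : ℝ) : EReal) ≤ intrinsicConj br (PhiF br A) b := by
    have h := le_conj_aux br (PhiF br A) c b
    rwa [hs, ← EReal.coe_sub] at h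
  refine lt_of_lt_of_le ?_ hterm
  rw [EReal.coe_lt_coe_iff]
  have hcb : br c b = br a₀ b + t * br eV b := by
    rw [hc]
    simp [map_add, map_smul, LinearMap.add_apply, LinearMap.smul_apply, smul_eq_mul]
  have htδ : M + 1 - C ≤ t * δ := by
    have h1 : (M + 1 - C) / δ ≤ t := le_max_left _ _
    calc M + 1 - C = ((M + 1 - C) / δ) * δ := (div_mul_cancel₀ _ hδpos.ne').symm
      _ ≤ t * δ := mul_le_mul_of_nonneg_right h1 hδpos.le
  have hexp : t * br eV b - t * m = t * δ := by rw [hδ]; ring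
  rw [hcb]
  linarith
/-- If Φ_A ≥ q on cl_w(conv A), then G_{Φ_A} = P_q(Φ_A^@). -/
theorem stmt10 [Nontrivial B] (br : B →ₗ[ℝ] B →ₗ[ℝ] ℝ)
    (hsym : ∀ x y : B, br x y = br y x)
    (A : Set B) (hA : IsQPositive br A)
    (hPhi : ∀ b ∈ @closure B (weakTop br) (convexHull ℝ A),
      ((qQ br b : ℝ) : EReal) ≤ PhiF br A b) :
    GSet br (PhiF br A) = PqSet br (intrinsicConj br (PhiF br A)) := by
  ext b
  simp only [GSet, PqSet, Set.mem_setOf_eq]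
  have hΦnb : PhiF br A b ≠ ⊥ := phi_ne_bot_aux br hA b
  have hcnb : intrinsicConj br (PhiF br A) b ≠ ⊥ := conj_ne_bot_aux br hsym hA b
  have hle := conj_ge_phi_aux br hsym hA b
  have hq := conj_ge_q_aux br hsym hA b
  have hdiag := le_conj_aux br (PhiF br A) b b
  constructor
  · intro h
    have hΦnt : PhiF br A b ≠ ⊤ := by
      intro ht
      rw [ht, EReal.top_add_of_ne_bot hcnb] at h
      exact (EReal.coe_lt_top _).ne h.symm
    have hcnt : intrinsicConj br (PhiF br A) b ≠ ⊤ := by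
      intro ht
      rw [ht, EReal.add_top_of_ne_bot hΦnb] at h
      exact (EReal.coe_lt_top _).ne h.symm
    have hs : PhiF br A b = ((PhiF br A b).toReal : EReal) :=
      (EReal.coe_toReal hΦnt hΦnb).symm
    have hr : intrinsicConj br (PhiF br A) b
        = ((intrinsicConj br (PhiF br A) b).toReal : EReal) :=
      (EReal.coe_toReal hcnt hcnb).symm
    set s := (PhiF br A b).toReal
    set r := (intrinsicConj br (PhiF br A) b).toReal
    rw [hs, hr, ← EReal.coe_add, EReal.coe_eq_coe_iff] at h
    rw [hs, hr, EReal.coe_le_coe_iff] at hle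
    rw [hr, EReal.coe_le_coe_iff] at hq
    have hcl : b ∈ @closure B (weakTop br) (convexHull ℝ A) := by
      by_contra hcl
      exact hcnt (conj_top_of_not_mem br hsym hA hcl)
    have hqs : qQ br b ≤ s := by
      have := hPhi b hcl
      rw [hs, EReal.coe_le_coe_iff] at this
      exact this
    rw [hr, EReal.coe_eq_coe_iff]
    simp only [qQ] at *
    linarith
  · intro h
    have hΦnt : PhiF br A b ≠ ⊤ := by
      intro ht
      rw [ht, h] at hle
      exact (EReal.coe_lt_top _).not_ge hle
    have hs : PhiF br A b = ((PhiF br A b).toReal : EReal) :=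
      (EReal.coe_toReal hΦnt hΦnb).symm
    set s := (PhiF br A b).toReal
    rw [hs, h, EReal.coe_le_coe_iff] at hle
    rw [hs, h, ← EReal.coe_sub, EReal.coe_le_coe_iff] at hdiag
    have hsq : s = qQ br b := by
      simp only [qQ] at *
      linarith
    rw [hs, h, hsq, ← EReal.coe_add, EReal.coe_eq_coe_iff]
    simp only [qQ]
    ring
end
end

section
/- Let A be a q-positive subset of an SSD space B, let Y be a topological real vector space, and let f : B → Y be a linear mapping that is continuous from the w(B,B) topology to the topology of Y, such that f(A) is convex and closed and f(x) = 0 implies q(x) = 0. Then Φ_A(b) ≥ q(b) for every b in the w(B,B)-closure of the convex hull of A. -/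
noncomputable section

variable {B : Type*} [AddCommGroup B] [Module ℝ B]

/-- If f : B → Y is linear, w(B,B)-continuous, f(A) is convex
and closed, and f(x) = 0 ⇒ q(x) = 0, then Φ_A ≥ q on cl_w(conv A). -/
theorem stmt11 [Nontrivial B] (br : B →ₗ[ℝ] B →ₗ[ℝ] ℝ)
    (hsym : ∀ x y : B, br x y = br y x)
    {Y : Type*} [AddCommGroup Y] [Module ℝ Y] [TopologicalSpace Y]
    [IsTopologicalAddGroup Y] [ContinuousSMul ℝ Y]
    (A : Set B) (hA : IsQPositive br A)
    (f : B →ₗ[ℝ] Y) (hf : @Continuous B Y (weakTop br) _ f)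
    (hconv : Convex ℝ (f '' A)) (hclosed : IsClosed (f '' A))
    (h0 : ∀ x : B, f x = 0 → qQ br x = 0) :
    ∀ b ∈ @closure B (weakTop br) (convexHull ℝ A),
      ((qQ br b : ℝ) : EReal) ≤ PhiF br A b := by
  letI : TopologicalSpace B := weakTop br
  intro b hb
  have h1 : f b ∈ closure (f '' (convexHull ℝ A)) :=
    image_closure_subset_closure_image hf ⟨b, hb, rfl⟩
  rw [f.image_convexHull, hconv.convexHull_eq, hclosed.closure_eq] at h1
  obtain ⟨a, ha, hfa⟩ := h1
  have hz : f (b - a) = 0 := by rw [map_sub, hfa, sub_self]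
  have hq : qQ br (b - a) = 0 := h0 _ hz
  have key : br b a - qQ br a = qQ br b := by
    have h2 := hsym a b
    simp only [qQ, map_sub, LinearMap.sub_apply] at hq ⊢
    linarith
  have : ((qQ br b : ℝ) : EReal) = ((br b a - qQ br a : ℝ) : EReal) := by rw [key]
  rw [this]
  exact le_iSup₂_of_le a ha le_rfl
end
end

section
/- Let A be a maximally q-positive convex subset of an SSD space B. Then A is an affine subset of B; that is, for all x, y ∈ A and all λ ∈ ℝ, λx + (1 − λ)y ∈ A. -/
noncomputable section

variable {B : Type*} [AddCommGroup B] [Module ℝ B]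

/-- A maximally q-positive convex set is affine. -/
theorem stmt12 [Nontrivial B] (br : B →ₗ[ℝ] B →ₗ[ℝ] ℝ)
    (hsym : ∀ x y : B, br x y = br y x)
    (A : Set B) (hA : IsMaxQPositive br A) (hconv : Convex ℝ A) :
    ∀ x ∈ A, ∀ y ∈ A, ∀ lam : ℝ, lam • x + (1 - lam) • y ∈ A := by
  intro x hx y hy lam
  set z : B := lam • x + (1 - lam) • y with hz
  have qsmul : ∀ (t : ℝ) (w : B), qQ br (t • w) = t ^ 2 * qQ br w := by
    intro t w
    simp only [qQ, map_smul, LinearMap.smul_apply, smul_eq_mul]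
    ring
  have qneg : ∀ w : B, qQ br (-w) = qQ br w := by
    intro w
    simp [qQ]
  have key : ∀ a ∈ A, 0 ≤ qQ br (z - a) := by
    intro a ha
    set t : ℝ := |lam| + |1 - lam| with htdef
    have ht1 : (1 : ℝ) ≤ t := by
      calc (1 : ℝ) = |lam + (1 - lam)| := by norm_num
        _ ≤ t := abs_add_le _ _
    have ht0 : (0 : ℝ) < t := lt_of_lt_of_le one_pos ht1
    obtain ⟨p₁, r₁, hp₁, hr₁, h1⟩ :
        ∃ p₁ r₁, p₁ ∈ A ∧ r₁ ∈ A ∧ lam • (x - a) = |lam| • (p₁ - r₁) := by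
      rcases le_or_gt 0 lam with h | h
      · exact ⟨x, a, hx, ha, by rw [abs_of_nonneg h]⟩
      · exact ⟨a, x, ha, hx, by rw [abs_of_neg h]; module⟩
    obtain ⟨p₂, r₂, hp₂, hr₂, h2⟩ :
        ∃ p₂ r₂, p₂ ∈ A ∧ r₂ ∈ A ∧ (1 - lam) • (y - a) = |1 - lam| • (p₂ - r₂) := by
      rcases le_or_gt 0 (1 - lam) with h | h
      · exact ⟨y, a, hy, ha, by rw [abs_of_nonneg h]⟩
      · exact ⟨a, y, ha, hy, by rw [abs_of_neg h]; module⟩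
    have hsum : (|lam| / t) + (|1 - lam| / t) = 1 := by
      field_simp
      exact htdef.symm
    have hp : (|lam| / t) • p₁ + (|1 - lam| / t) • p₂ ∈ A :=
      hconv hp₁ hp₂ (by positivity) (by positivity) hsum
    have hr : (|lam| / t) • r₁ + (|1 - lam| / t) • r₂ ∈ A :=
      hconv hr₁ hr₂ (by positivity) (by positivity) hsum
    have heq : z - a = t • (((|lam| / t) • p₁ + (|1 - lam| / t) • p₂)
        - ((|lam| / t) • r₁ + (|1 - lam| / t) • r₂)) := by
      have expand : z - a = lam • (x - a) + (1 - lam) • (y - a) := by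
        rw [hz]; module
      rw [expand, h1, h2]
      have htne : t ≠ 0 := ht0.ne'
      match_scalars <;> (field_simp; try ring)
    rw [heq, qsmul]
    exact mul_nonneg (sq_nonneg t) (hA.1.2 _ hp _ hr)
  have hC : IsQPositive br (insert z A) := by
    refine ⟨⟨z, Set.mem_insert _ _⟩, ?_⟩
    rintro b (rfl | hb) c (rfl | hc)
    · simp [qQ]
    · exact key _ hc
    · rw [show b - z = -(z - b) by abel, qneg]; exact key _ hb
    · exact hA.1.2 _ hb _ hc
  have := hA.2 _ hC (Set.subset_insert z A)
  rw [← this]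
  exact Set.mem_insert z A
end
end

section
/- Let B be an SSD space and x₁, x₂ ∈ B with q(x₁ − x₂) ≤ 0. Then for every λ ∈ [0,1], λx₁ + (1 − λ)x₂ ∈ ({x₁, x₂}^π)^π. -/
noncomputable section

variable {B : Type*} [AddCommGroup B] [Module ℝ B]

/-- If q(x₁ - x₂) ≤ 0 then λx₁ + (1-λ)x₂ ∈ {x₁,x₂}^ππ for λ ∈ [0,1]. -/
theorem stmt13 [Nontrivial B] (br : B →ₗ[ℝ] B →ₗ[ℝ] ℝ)
    (hsym : ∀ x y : B, br x y = br y x)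
    (x₁ x₂ : B) (h : qQ br (x₁ - x₂) ≤ 0) :
    ∀ lam : ℝ, 0 ≤ lam → lam ≤ 1 →
      lam • x₁ + (1 - lam) • x₂ ∈ qPi br (qPi br ({x₁, x₂} : Set B)) := by
  intro lam h0 h1 b hb
  have hneg : ∀ x y : B, qQ br (x - y) = qQ br (y - x) := by
    intro x y
    have e : x - y = -(y - x) := by abel
    rw [qQ, qQ, e]; simp; ring
  have hu : 0 ≤ qQ br (x₁ - b) := by
    rw [hneg]; exact hb x₁ (by simp)
  have hv : 0 ≤ qQ br (x₂ - b) := by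
    rw [hneg]; exact hb x₂ (by simp)
  have e : lam • x₁ + (1 - lam) • x₂ - b = lam • (x₁ - b) + (1 - lam) • (x₂ - b) := by
    module
  rw [e]
  have hbr := hsym (x₁ - b) (x₂ - b)
  have hsub : x₁ - x₂ = (x₁ - b) - (x₂ - b) := by abel
  rw [hsub] at h
  simp only [qQ, map_add, map_smul, map_sub, smul_eq_mul, LinearMap.sub_apply,
    LinearMap.add_apply, LinearMap.smul_apply] at *
  nlinarith [mul_nonneg h0 (sub_nonneg.2 h1), sq_nonneg lam, sq_nonneg (1-lam)]
end
end

section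
/- Let A be a q-positive subset of an SSD space B. If there exist two distinct maximally q-positive sets containing A, then there exists an injective map from the real interval [0,1] into the family of maximally q-positive sets containing A; in particular A has at least continuum many maximally q-positive extensions. -/
noncomputable section

variable {B : Type*} [AddCommGroup B] [Module ℝ B]

private lemma q_combo (br : B →ₗ[ℝ] B →ₗ[ℝ] ℝ) (hsym : ∀ x y : B, br x y = br y x)
    (t : ℝ) (x y : B) :
    qQ br (t • x + (1 - t) • y)
      = t * qQ br x + (1 - t) * qQ br y - t * (1 - t) * qQ br (x - y) := by
  simp only [qQ, map_add, map_smul, map_sub, LinearMap.add_apply, LinearMap.smul_apply,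
    LinearMap.sub_apply, smul_eq_mul]
  rw [hsym y x]
  ring

private lemma q_smul (br : B →ₗ[ℝ] B →ₗ[ℝ] ℝ) (t : ℝ) (x : B) :
    qQ br (t • x) = t ^ 2 * qQ br x := by
  simp only [qQ, map_smul, LinearMap.smul_apply, smul_eq_mul]
  ring

private lemma exists_max_ext (br : B →ₗ[ℝ] B →ₗ[ℝ] ℝ) {C : Set B} (hC : IsQPositive br C) :
    ∃ M, C ⊆ M ∧ IsMaxQPositive br M := by
  have hch : ∀ c ⊆ {D : Set B | IsQPositive br D}, IsChain (· ⊆ ·) c → c.Nonempty →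
      ∃ ub ∈ {D : Set B | IsQPositive br D}, ∀ s ∈ c, s ⊆ ub := by
    intro c hc hchain hne
    obtain ⟨D₀, hD₀⟩ := hne
    refine ⟨⋃₀ c, ⟨?_, ?_⟩, fun s hs => Set.subset_sUnion_of_mem hs⟩
    · obtain ⟨x, hx⟩ := (hc hD₀).1
      exact ⟨x, Set.mem_sUnion.2 ⟨D₀, hD₀, hx⟩⟩
    · rintro b hb c' hc'
      obtain ⟨D₁, hD₁, hb₁⟩ := hb
      obtain ⟨D₂, hD₂, hc₂⟩ := hc'
      rcases hchain.total hD₁ hD₂ with h | h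
      · exact (hc hD₂).2 b (h hb₁) c' hc₂
      · exact (hc hD₁).2 b hb₁ c' (h hc₂)
  obtain ⟨M, hCM, hmax⟩ := zorn_subset_nonempty {D : Set B | IsQPositive br D} hch C hC
  exact ⟨M, hCM, hmax.1, fun D hD hMD => le_antisymm (hmax.2 hD hMD) hMD⟩

/-- If a q-positive set has two distinct maximally q-positive
extensions, then it has continuum many. -/
theorem stmt15 [Nontrivial B] (br : B →ₗ[ℝ] B →ₗ[ℝ] ℝ)
    (hsym : ∀ x y : B, br x y = br y x)
    (A : Set B) (hA : IsQPositive br A)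
    (M₁ M₂ : Set B) (hM₁ : IsMaxQPositive br M₁) (hAM₁ : A ⊆ M₁)
    (hM₂ : IsMaxQPositive br M₂) (hAM₂ : A ⊆ M₂) (hne : M₁ ≠ M₂) :
    ∃ g : Set.Icc (0 : ℝ) 1 → Set B, Function.Injective g ∧
      ∀ t : Set.Icc (0 : ℝ) 1, IsMaxQPositive br (g t) ∧ A ⊆ g t := by
  have qneg : ∀ z : B, qQ br (-z) = qQ br z := by
    intro z; simp [qQ]
  obtain ⟨b, hbM₁, hbM₂⟩ : ∃ b ∈ M₁, b ∉ M₂ := by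
    by_contra hcon
    push_neg at hcon
    exact hne (hM₁.2 M₂ hM₂.1 hcon).symm
  obtain ⟨c, hcM₂, hbc⟩ : ∃ c ∈ M₂, qQ br (b - c) < 0 := by
    by_contra hcon
    push_neg at hcon
    have hpos : IsQPositive br (insert b M₂) := by
      refine ⟨⟨b, Set.mem_insert _ _⟩, ?_⟩
      rintro x hx y hy
      rcases hx with hxb | hx <;> rcases hy with hyb | hy
      · rw [hxb, hyb]; simp [qQ]
      · rw [hxb]; exact hcon y hy
      · rw [hyb]
        have hxb2 : x - b = -(b - x) := by abel
        rw [hxb2, qneg]; exact hcon x hx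
      · exact hM₂.1.2 x hx y hy
    have heq := hM₂.2 _ hpos (Set.subset_insert _ _)
    exact hbM₂ (heq ▸ Set.mem_insert b M₂)
  set P : ℝ → B := fun t => t • b + (1 - t) • c with hP
  have hApos : ∀ t : ℝ, 0 ≤ t → t ≤ 1 → IsQPositive br (insert (P t) A) := by
    intro t ht0 ht1
    refine ⟨⟨_, Set.mem_insert _ _⟩, ?_⟩
    have hkey : ∀ a ∈ A, 0 ≤ qQ br (P t - a) := by
      intro a ha
      have h1 : P t - a = t • (b - a) + (1 - t) • (c - a) := by
        simp only [hP, smul_sub]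
        module
      rw [h1, q_combo br hsym]
      have hba : 0 ≤ qQ br (b - a) := hM₁.1.2 b hbM₁ a (hAM₁ ha)
      have hca : 0 ≤ qQ br (c - a) := hM₂.1.2 c hcM₂ a (hAM₂ ha)
      have h2 : (b - a) - (c - a) = b - c := by abel
      rw [h2]
      have h1t : (0:ℝ) ≤ 1 - t := by linarith
      have h5 : t * (1 - t) * qQ br (b - c) ≤ 0 :=
        mul_nonpos_of_nonneg_of_nonpos (mul_nonneg ht0 h1t) hbc.le
      nlinarith [mul_nonneg ht0 hba, mul_nonneg h1t hca]
    rintro x hx y hy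
    rcases hx with hxP | hx <;> rcases hy with hyP | hy
    · rw [hxP, hyP]; simp [qQ]
    · rw [hxP]; exact hkey y hy
    · rw [hyP]
      have hxP2 : x - P t = -(P t - x) := by abel
      rw [hxP2, qneg]; exact hkey x hx
    · exact hA.2 x hx y hy
  choose M hsub hmax using fun t : Set.Icc (0:ℝ) 1 => exists_max_ext br (hApos t t.2.1 t.2.2)
  refine ⟨M, ?_, fun t => ⟨hmax t, fun a ha => hsub t (Set.mem_insert_of_mem _ ha)⟩⟩
  intro t s hts
  have h1 : P t ∈ M s := hts ▸ hsub t (Set.mem_insert _ _)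
  have h2 : P s ∈ M s := hsub s (Set.mem_insert _ _)
  have h3 : 0 ≤ qQ br (P t - P s) := (hmax s).1.2 _ h1 _ h2
  have h4 : P (t:ℝ) - P (s:ℝ) = ((t:ℝ) - s) • (b - c) := by
    simp only [hP, smul_sub]
    module
  rw [h4, q_smul] at h3
  have hsq : ((t:ℝ) - s) ^ 2 = 0 := by nlinarith [sq_nonneg ((t:ℝ) - s)]
  have : (t:ℝ) = s := by nlinarith [sq_nonneg ((t:ℝ) - s)]
  exact Subtype.ext this
end
end

section
/- Let P be a q-positive subset of an SSD space B such that Φ_P(b) ≥ q(b) for all b ∈ B. Then P is premaximally q-positive, and its unique maximally q-positive superset is P^π = P_q(Φ_P). -/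
noncomputable section

variable {B : Type*} [AddCommGroup B] [Module ℝ B]

/-- If Φ_P ≥ q on B then P is premaximally q-positive and its
unique maximally q-positive superset is P^π = P_q(Φ_P). -/
theorem stmt16 [Nontrivial B] (br : B →ₗ[ℝ] B →ₗ[ℝ] ℝ)
    (hsym : ∀ x y : B, br x y = br y x)
    (P : Set B) (hP : IsQPositive br P)
    (hPhi : ∀ b : B, ((qQ br b : ℝ) : EReal) ≤ PhiF br P b) :
    (∃! M : Set B, IsMaxQPositive br M ∧ P ⊆ M) ∧
    IsMaxQPositive br (qPi br P) ∧ P ⊆ qPi br P ∧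
    qPi br P = PqSet br (PhiF br P) := by
  obtain ⟨hne, hpos⟩ := hP
  have qsub : ∀ b c : B, qQ br (b - c) = qQ br b + qQ br c - br b c := by
    intro b c
    simp only [qQ, map_sub, LinearMap.sub_apply]
    rw [hsym c b]; ring
  have hmemPi : ∀ b : B, b ∈ qPi br P ↔ ∀ a ∈ P, br b a - qQ br a ≤ qQ br b := by
    intro b
    constructor
    · intro h a ha; have := h a ha; rw [qsub] at this; linarith
    · intro h a ha; rw [qsub]; have := h a ha; linarith
  have hPhiLe : ∀ b : B, b ∈ qPi br P ↔ PhiF br P b ≤ ((qQ br b : ℝ) : EReal) := by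
    intro b
    rw [hmemPi b, PhiF, iSup₂_le_iff]
    constructor
    · intro h a ha; exact_mod_cast h a ha
    · intro h a ha; exact_mod_cast h a ha
  have hEq : qPi br P = PqSet br (PhiF br P) := by
    ext b
    rw [hPhiLe b, PqSet, Set.mem_setOf_eq]
    exact ⟨fun h => le_antisymm h (hPhi b), fun h => le_of_eq h⟩
  have hsubPi : P ⊆ qPi br P := fun p hp a ha => hpos p hp a ha
  have hPiPos : IsQPositive br (qPi br P) := by
    refine ⟨hne.mono hsubPi, ?_⟩
    intro b hb c hc
    set m := (1/2 : ℝ) • b + (1/2 : ℝ) • c with hm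
    have hbr : br m m = (1/2) * ((1/2) * br b b + br b c + (1/2) * br c c) := by
      simp only [hm, map_add, map_smul, LinearMap.add_apply, LinearMap.smul_apply,
        smul_eq_mul]
      rw [hsym c b]; ring
    have hmid : ∀ a ∈ P, br m a - qQ br a ≤ (1/2) * qQ br b + (1/2) * qQ br c := by
      intro a ha
      have hb' := (hmemPi b).1 hb a ha
      have hc' := (hmemPi c).1 hc a ha
      have hma : br m a = (1/2) * br b a + (1/2) * br c a := by
        simp only [hm, map_add, map_smul, LinearMap.add_apply, LinearMap.smul_apply,
          smul_eq_mul]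
      rw [hma]; linarith
    have hsup : PhiF br P m ≤ (((1/2) * qQ br b + (1/2) * qQ br c : ℝ) : EReal) := by
      rw [PhiF, iSup₂_le_iff]
      intro a ha; exact_mod_cast hmid a ha
    have hq : qQ br m ≤ (1/2) * qQ br b + (1/2) * qQ br c := by
      exact_mod_cast (hPhi m).trans hsup
    have e3 : qQ br m = (1/2) * br m m := rfl
    rw [qsub]
    rw [e3, hbr] at hq
    simp only [qQ] at hq ⊢
    linarith
  have hmax : IsMaxQPositive br (qPi br P) := by
    refine ⟨hPiPos, ?_⟩
    rintro C ⟨hCne, hCpos⟩ hsub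
    refine Set.Subset.antisymm (fun c hc a ha => ?_) hsub
    exact hCpos c hc a (hsub (hsubPi ha))
  have huniq : ∀ M : Set B, IsMaxQPositive br M ∧ P ⊆ M → M = qPi br P := by
    rintro M ⟨hMmax, hMP⟩
    have hMsub : M ⊆ qPi br P := fun m hm a ha => hMmax.1.2 m hm a (hMP ha)
    exact (hMmax.2 _ hPiPos hMsub).symm
  exact ⟨⟨qPi br P, ⟨hmax, hsubPi⟩, huniq⟩, hmax, hsubPi, hEq⟩
end
end
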